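/- arXiv:1108.1370 — 8 statements merged into one kernel-verified Lean document; each statement's English description precedes it below -/
import Mathlib

section
/- If f is a continuous function on a compact connected metric space E equipped with a finite Borel measure μ of full support, then f has a unique median over E; that is, there is exactly one real number m such that μ{x ∈ E : f(x) ≥ m} ≥ μ(E)/2 and μ{x ∈ E : f(x) ≤ m} ≥ μ(E)/2. -/
open MeasureTheory Set

theorem unique_median_of_continuous {E : Type*} [MetricSpace E] [CompactSpace E]
    [ConnectedSpace E] [Nonempty E] [MeasurableSpace E] [BorelSpace E]
    (μ : Measure E) [IsFiniteMeasure μ] [μ.IsOpenPosMeasure]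
    (f : E → ℝ) (hf : Continuous f) :
    ∃! m : ℝ, μ Set.univ / 2 ≤ μ {x | m ≤ f x} ∧ μ Set.univ / 2 ≤ μ {x | f x ≤ m} := by
  have hμpos : 0 < μ Set.univ := isOpen_univ.measure_pos μ univ_nonempty
  have hμfin : μ Set.univ ≠ ⊤ := measure_ne_top μ _
  have hhalfpos : 0 < μ Set.univ / 2 := ENNReal.half_pos hμpos.ne'
  have hmeas_le : ∀ t : ℝ, MeasurableSet {x | f x ≤ t} := fun t =>
    (isClosed_le hf continuous_const).measurableSet
  have hmeas_ge : ∀ t : ℝ, MeasurableSet {x | t ≤ f x} := fun t =>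
    (isClosed_le continuous_const hf).measurableSet
  obtain ⟨xmax, -, hxmax⟩ := isCompact_univ.exists_isMaxOn univ_nonempty hf.continuousOn
  replace hxmax : ∀ x, f x ≤ f xmax := fun x => hxmax (mem_univ x)
  obtain ⟨xmin, -, hxmin⟩ := isCompact_univ.exists_isMinOn univ_nonempty hf.continuousOn
  replace hxmin : ∀ x, f xmin ≤ f x := fun x => hxmin (mem_univ x)
  set S : Set ℝ := {t | μ Set.univ / 2 ≤ μ {x | f x ≤ t}} with hS
  have hSne : (f xmax) ∈ S := by
    have huniv : {x | f x ≤ f xmax} = univ := eq_univ_of_forall fun x => hxmax x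
    show μ Set.univ / 2 ≤ μ {x | f x ≤ f xmax}
    rw [huniv]
    exact ENNReal.half_le_self
  have hSbdd : BddBelow S := by
    refine ⟨f xmin, fun t ht => ?_⟩
    by_contra h
    push_neg at h
    have hemp : {x | f x ≤ t} = ∅ := eq_empty_of_forall_notMem fun x hx =>
      absurd (le_trans (hxmin x) hx) (not_le.2 h)
    have ht' : μ Set.univ / 2 ≤ μ {x | f x ≤ t} := ht
    rw [hemp, measure_empty] at ht'
    exact hhalfpos.ne' (le_antisymm ht' zero_le)
  set m := sInf S with hm
  -- the sets are antitone in the 1/(n+1) parameter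
  have hdiv_anti : ∀ i j : ℕ, i ≤ j → (1:ℝ)/(j+1) ≤ 1/(i+1) := by
    intro i j hij
    apply one_div_le_one_div_of_le (by positivity)
    have : (i:ℝ) ≤ j := Nat.cast_le.mpr hij
    linarith
  have key_le : ∀ n : ℕ, μ Set.univ / 2 ≤ μ {x | f x ≤ m + 1/(n+1)} := by
    intro n
    have hpos : (0:ℝ) < 1/(n+1) := by positivity
    obtain ⟨t, htS, htlt⟩ := exists_lt_of_csInf_lt ⟨_, hSne⟩
      (show sInf S < m + 1/(n+1) by rw [← hm]; linarith)
    exact le_trans htS (measure_mono fun x hx => le_trans hx htlt.le)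
  have claim1 : μ Set.univ / 2 ≤ μ {x | f x ≤ m} := by
    have hset : {x | f x ≤ m} = ⋂ n : ℕ, {x | f x ≤ m + 1/(n+1)} := by
      ext x
      simp only [mem_iInter, mem_setOf_eq]
      constructor
      · intro h n
        have : (0:ℝ) ≤ 1/(n+1) := by positivity
        linarith
      · intro h
        refine le_of_forall_pos_le_add fun ε hε => ?_
        obtain ⟨n, hn⟩ := exists_nat_one_div_lt hε
        have := h n
        have : (1:ℝ)/(n+1) < ε := hn
        linarith [h n]
    rw [hset, Directed.measure_iInter (fun n => (hmeas_le _).nullMeasurableSet)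
      (fun i j => ⟨max i j, fun x hx => le_trans hx
          (add_le_add_right (hdiv_anti i _ (Nat.le_max_left i j)) m),
        fun x hx => le_trans hx
          (add_le_add_right (hdiv_anti j _ (Nat.le_max_right i j)) m)⟩)
      ⟨0, measure_ne_top μ _⟩]
    exact le_iInf key_le
  have key_ge : ∀ t : ℝ, t < m → μ Set.univ / 2 ≤ μ {x | t < f x} := by
    intro t ht
    have htS : t ∉ S := notMem_of_lt_csInf ht hSbdd
    have hlt : μ {x | f x ≤ t} < μ Set.univ / 2 := lt_of_not_ge htS
    have hcompl : {x | f x ≤ t}ᶜ = {x | t < f x} := by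
      ext x; simp [not_le]
    have := measure_compl (hmeas_le t) (measure_ne_top μ _)
    rw [hcompl] at this
    rw [this]
    refine ENNReal.le_sub_of_add_le_right (measure_ne_top μ _) ?_
    calc μ Set.univ / 2 + μ {x | f x ≤ t}
        ≤ μ Set.univ / 2 + μ Set.univ / 2 := add_le_add_right hlt.le _
      _ = μ Set.univ := ENNReal.add_halves _
  have claim2 : μ Set.univ / 2 ≤ μ {x | m ≤ f x} := by
    have hset : {x | m ≤ f x} = ⋂ n : ℕ, {x | m - 1/(n+1) < f x} := by
      ext x
      simp only [mem_iInter, mem_setOf_eq]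
      constructor
      · intro h n
        have : (0:ℝ) < 1/(n+1) := by positivity
        linarith
      · intro h
        refine le_of_forall_pos_le_add fun ε hε => ?_
        obtain ⟨n, hn⟩ := exists_nat_one_div_lt hε
        have h1 := h n
        have h2 : (1:ℝ)/(n+1) < ε := hn
        linarith
    rw [hset, Directed.measure_iInter
      (fun n => (isOpen_lt continuous_const hf).measurableSet.nullMeasurableSet)
      (fun i j => ⟨max i j, fun x hx => lt_of_le_of_lt
          (by linarith [hdiv_anti i (max i j) (Nat.le_max_left i j)] :
            m - 1/(i+1) ≤ m - 1/((max i j : ℕ)+1)) hx,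
        fun x hx => lt_of_le_of_lt
          (by linarith [hdiv_anti j (max i j) (Nat.le_max_right i j)] :
            m - 1/(j+1) ≤ m - 1/((max i j : ℕ)+1)) hx⟩)
      ⟨0, measure_ne_top μ _⟩]
    refine le_iInf fun n => key_ge _ ?_
    have : (0:ℝ) < 1/(n+1) := by positivity
    linarith
  -- uniqueness helper
  have uniq : ∀ a b : ℝ, a < b →
      μ Set.univ / 2 ≤ μ {x | f x ≤ a} → μ Set.univ / 2 ≤ μ {x | b ≤ f x} → False := by
    intro a b hab ha hb
    set U := {x | a < f x} ∩ {x | f x < b} with hU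
    have hUopen : IsOpen U :=
      (isOpen_lt continuous_const hf).inter (isOpen_lt hf continuous_const)
    have hd1 : Disjoint {x | f x ≤ a} (U ∪ {x | b ≤ f x}) := by
      rw [Set.disjoint_left]
      rintro x hx (⟨hx1, -⟩ | hx2)
      · simp only [mem_setOf_eq] at hx hx1; linarith
      · simp only [mem_setOf_eq] at hx hx2; linarith
    have hd2 : Disjoint U {x | b ≤ f x} := by
      rw [Set.disjoint_left]
      rintro x ⟨-, hx2⟩ hx3
      simp only [mem_setOf_eq] at hx2 hx3; linarith
    have hcover : {x | f x ≤ a} ∪ (U ∪ {x | b ≤ f x}) = univ := by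
      ext x
      simp only [mem_union, mem_inter_iff, mem_setOf_eq, mem_univ, iff_true, hU]
      rcases le_or_gt (f x) a with h | h
      · exact Or.inl h
      · rcases lt_or_ge (f x) b with h' | h'
        · exact Or.inr (Or.inl ⟨h, h'⟩)
        · exact Or.inr (Or.inr h')
    have hsum : μ Set.univ = μ {x | f x ≤ a} + (μ U + μ {x | b ≤ f x}) := by
      rw [← hcover, measure_union hd1 (hUopen.measurableSet.union (hmeas_ge b)),
        measure_union hd2 (hmeas_ge b)]
    have hU0 : μ U = 0 := by
      by_contra hU0
      have hUpos : 0 < μ U := pos_iff_ne_zero.mpr hU0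
      have : μ Set.univ < μ Set.univ := by
        calc μ Set.univ = μ {x | f x ≤ a} + (μ U + μ {x | b ≤ f x}) := hsum
          _ ≥ μ Set.univ / 2 + (μ U + μ Set.univ / 2) :=
              add_le_add ha (add_le_add_right hb _)
          _ = μ Set.univ + μ U := by
              rw [← add_assoc, add_comm (μ Set.univ / 2) (μ U), add_assoc,
                ENNReal.add_halves, add_comm]
          _ > μ Set.univ + 0 := by
              exact ENNReal.add_lt_add_left hμfin hUpos
          _ = μ Set.univ := add_zero _
      exact lt_irrefl _ this
    have hUemp : U = ∅ := by
      by_contra hne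
      have : 0 < μ U := hUopen.measure_pos μ (nonempty_iff_ne_empty.mpr hne)
      exact this.ne' hU0
    obtain ⟨x, hx⟩ := nonempty_of_measure_ne_zero (show μ {x | f x ≤ a} ≠ 0 from
      fun h => hhalfpos.ne' (le_antisymm (h ▸ ha) zero_le))
    obtain ⟨y, hy⟩ := nonempty_of_measure_ne_zero (show μ {x | b ≤ f x} ≠ 0 from
      fun h => hhalfpos.ne' (le_antisymm (h ▸ hb) zero_le))
    simp only [mem_setOf_eq] at hx hy
    have hmid : (a + b) / 2 ∈ Icc (f x) (f y) := ⟨by linarith, by linarith⟩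
    obtain ⟨z, hz⟩ := intermediate_value_univ x y hf hmid
    have : z ∈ U := ⟨by simp only [mem_setOf_eq, hz]; linarith,
      by simp only [mem_setOf_eq, hz]; linarith⟩
    rw [hUemp] at this
    exact this
  refine ⟨m, ⟨claim2, claim1⟩, fun m' ⟨h1', h2'⟩ => ?_⟩
  rcases lt_trichotomy m' m with h | h | h
  · exact absurd (uniq m' m h h2' claim2) not_false
  · exact h
  · exact absurd (uniq m m' h claim1 h1') not_false
end

section
/- A continuous function u on a planar domain Ω that satisfies the local median value property cannot attain a strict local maximum at any interior point: there is no x₀ ∈ Ω and ρ > 0 with B(x₀,ρ) ⊂ Ω such that u(x) < u(x₀) for all x ∈ B(x₀,ρ) \ {x₀}. -/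
open MeasureTheory Set Metric Real Filter Topology

/-- `m` is a median of `u` over the circle `∂B(x,r)` with respect to arclength measure,
parametrized by `θ ↦ x + r e^{iθ}`. -/
def IsCircleMedian (x : ℂ) (r : ℝ) (u : ℂ → ℝ) (m : ℝ) : Prop :=
  volume (Ioc (0:ℝ) (2*π)) / 2 ≤ volume {θ ∈ Ioc (0:ℝ) (2*π) | m ≤ u (circleMap x r θ)} ∧
  volume (Ioc (0:ℝ) (2*π)) / 2 ≤ volume {θ ∈ Ioc (0:ℝ) (2*π) | u (circleMap x r θ) ≤ m}

/-- `u` has the local median value property on `Ω`. -/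
def HasLMVP (Ω : Set ℂ) (u : ℂ → ℝ) : Prop :=
  ∃ R : ℂ → ℝ, ContinuousOn R Ω ∧
    (∀ x ∈ Ω, 0 < R x ∧ R x ≤ Metric.infDist x Ωᶜ) ∧
    (∀ x ∈ Ω, ∀ r : ℝ, 0 < r → r ≤ R x → IsCircleMedian x r u (u x))

theorem no_strict_local_max (Ω : Set ℂ) (hΩ : IsOpen Ω) (hconn : IsConnected Ω)
    (u : ℂ → ℝ) (hu : ContinuousOn u Ω) (hlmvp : HasLMVP Ω u) :
    ¬ ∃ x₀ ∈ Ω, ∃ ρ > (0:ℝ), ball x₀ ρ ⊆ Ω ∧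
      ∀ x ∈ ball x₀ ρ \ {x₀}, u x < u x₀ := by
  rintro ⟨x₀, hx₀, ρ, hρ, hball, hmax⟩
  obtain ⟨R, hRcont, hRpos, hmed⟩ := hlmvp
  obtain ⟨hR0, -⟩ := hRpos x₀ hx₀
  set r : ℝ := min (R x₀) (ρ / 2) with hr
  have hrpos : 0 < r := lt_min hR0 (by linarith)
  have hrR : r ≤ R x₀ := min_le_left _ _
  have hrρ : r < ρ := lt_of_le_of_lt (min_le_right _ _) (by linarith)
  obtain ⟨h1, -⟩ := hmed x₀ hx₀ r hrpos hrR
  -- every circle point is in the punctured ball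
  have hcirc : ∀ θ : ℝ, u (circleMap x₀ r θ) < u x₀ := by
    intro θ
    apply hmax
    constructor
    · simp [Metric.mem_ball, dist_eq, circleMap, abs_of_pos hrpos, hrρ]
    · simp only [mem_singleton_iff]
      intro h
      have := circleMap_ne_center (ne_of_gt hrpos) (c := x₀) (θ := θ)
      exact this h
  have hempty : {θ ∈ Ioc (0:ℝ) (2*π) | u x₀ ≤ u (circleMap x₀ r θ)} = ∅ := by
    ext θ
    simp only [mem_setOf_eq, mem_empty_iff_false, iff_false, not_and]
    intro _
    exact not_le.mpr (hcirc θ)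
  rw [hempty] at h1
  simp only [measure_empty, nonpos_iff_eq_zero] at h1
  have hπ : (0:ℝ) < 2 * π := by positivity
  have : volume (Ioc (0:ℝ) (2*π)) = ENNReal.ofReal (2*π) := by
    simp [Real.volume_Ioc]
  rw [this] at h1
  have h2 : ENNReal.ofReal (2*π) / 2 ≠ 0 := by
    refine ENNReal.div_ne_zero.mpr ⟨?_, by norm_num⟩
    simp [ENNReal.ofReal_eq_zero, not_le, hπ, Real.pi_pos]
  exact h2 h1
end

section
/- A continuous function u on a planar domain Ω that satisfies the local median value property cannot attain a strict local minimum at any interior point. -/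
open MeasureTheory Set Metric Real Filter Topology

theorem no_strict_local_min (Ω : Set ℂ) (hΩ : IsOpen Ω) (hconn : IsConnected Ω)
    (u : ℂ → ℝ) (hu : ContinuousOn u Ω) (hlmvp : HasLMVP Ω u) :
    ¬ ∃ x₀ ∈ Ω, ∃ ρ > (0:ℝ), ball x₀ ρ ⊆ Ω ∧
      ∀ x ∈ ball x₀ ρ \ {x₀}, u x₀ < u x := by
  rintro ⟨x₀, hx₀, ρ, hρ, hball, hmin⟩
  obtain ⟨R, -, hR, hmed⟩ := hlmvp
  set r : ℝ := min (R x₀) (ρ / 2) with hr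
  have hRpos := (hR x₀ hx₀).1
  have hrpos : 0 < r := lt_min hRpos (by linarith)
  have hrR : r ≤ R x₀ := min_le_left _ _
  have hmem : ∀ θ : ℝ, circleMap x₀ r θ ∈ ball x₀ ρ \ {x₀} := by
    intro θ
    constructor
    · have : dist (circleMap x₀ r θ) x₀ = r := by
        rw [← mem_sphere]; exact circleMap_mem_sphere x₀ hrpos.le θ
      have : dist (circleMap x₀ r θ) x₀ < ρ := by
        rw [this]; exact lt_of_le_of_lt (min_le_right _ _) (by linarith)
      simpa [Metric.mem_ball] using this
    · simp only [mem_singleton_iff]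
      intro h
      have : dist (circleMap x₀ r θ) x₀ = r := by
        rw [← mem_sphere]; exact circleMap_mem_sphere x₀ hrpos.le θ
      rw [h] at this
      simp at this
      linarith
  have hempty : {θ ∈ Ioc (0:ℝ) (2*π) | u (circleMap x₀ r θ) ≤ u x₀} = ∅ := by
    ext θ
    simp only [mem_setOf_eq, mem_empty_iff_false, iff_false, not_and]
    intro _ hle
    exact absurd hle (not_le.mpr (hmin _ (hmem θ)))
  have h2 := (hmed x₀ hx₀ r hrpos hrR).2
  rw [hempty, measure_empty] at h2
  have h3 : volume (Ioc (0:ℝ) (2*π)) = 0 := by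
    have := le_antisymm h2 zero_le
    rw [ENNReal.div_eq_zero_iff] at this
    rcases this with h | h
    · exact h
    · exact absurd h (by norm_num)
  rw [Real.volume_Ioc, ENNReal.ofReal_eq_zero] at h3
  have := Real.pi_pos
  linarith
end

section
/- Let φ ∈ C²(ℝ²) with Dφ(x₀) ≠ 0. Then the median of φ over the circle ∂B(x₀,r) (with respect to arclength measure) satisfies med_{∂B(x₀,r)} φ = φ(x₀) + (r²/2)·Δ₁φ(x₀) + o(r²) as r → 0, where Δ₁φ = |Dφ| div(Dφ/|Dφ|) is the 1-Laplacian, equal at a point with nonzero gradient to the second derivative of φ in the direction orthogonal to Dφ. -/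
set_option maxHeartbeats 1000000
open MeasureTheory Set Metric Real Filter Topology


lemma measure_cos_ge_lt {ψ t : ℝ} (hψ : |ψ| ≤ π) (ht0 : 0 < t) (ht1 : t ≤ 1) :
    volume {θ ∈ Ioc (0:ℝ) (2*π) | t ≤ Real.cos (θ - ψ)} < ENNReal.ofReal π := by
  set β := Real.arccos t with hβ
  have hβ0 : 0 ≤ β := Real.arccos_nonneg t
  have hβπ : β < π / 2 := Real.arccos_lt_pi_div_two.2 ht0
  have hcosβ : Real.cos β = t := Real.cos_arccos (by linarith) ht1
  have hπ : (0:ℝ) < π := Real.pi_pos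
  have hψ1 : -π ≤ ψ := (abs_le.1 hψ).1
  have hψ2 : ψ ≤ π := (abs_le.1 hψ).2
  -- containment in two intervals
  have hsub : {θ ∈ Ioc (0:ℝ) (2*π) | t ≤ Real.cos (θ - ψ)} ⊆
      (Icc (ψ - β) (ψ + β) ∩ Ioc 0 (2*π)) ∪ (Icc (ψ + 2*π - β) (ψ + 2*π + β) ∩ Ioc 0 (2*π)) := by
    rintro θ ⟨hθ, hcos⟩
    set s := θ - ψ with hs
    set k : ℤ := round (s / (2*π)) with hk
    set s' := s - k * (2*π) with hs'
    have h2π : (0:ℝ) < 2*π := by linarith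
    have hs'abs : |s'| ≤ π := by
      have h1 : |s / (2*π) - k| ≤ 1/2 := abs_sub_round _
      have : s' = (s / (2*π) - k) * (2*π) := by field_simp [hs']; ring
      rw [this, abs_mul, abs_of_pos h2π]
      nlinarith
    have hcs' : Real.cos s' = Real.cos s := Real.cos_periodic.sub_int_mul_eq k
    have hts' : t ≤ Real.cos |s'| := by rw [Real.cos_abs, hcs']; exact hcos
    have hs'β : |s'| ≤ β := by
      by_contra h
      push_neg at h
      have := Real.strictAntiOn_cos ⟨hβ0, by linarith⟩ ⟨abs_nonneg s', hs'abs⟩ h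
      rw [hcosβ] at this; linarith
    have hsl : -π < s := by simp only [hs]; linarith [hθ.1]
    have hsu : s ≤ 3*π := by simp only [hs]; linarith [hθ.2]
    have hk01 : k = 0 ∨ k = 1 := by
      have h1 : -π - β ≤ (k:ℝ) * (2*π) := by
        have := (abs_le.1 hs'β).2
        simp only [hs'] at this; linarith
      have h2 : (k:ℝ) * (2*π) ≤ 3*π + β := by
        have := (abs_le.1 hs'β).1
        simp only [hs'] at this; linarith
      have hk1 : (-1:ℝ) < (k:ℝ) := by nlinarith
      have hk2 : (k:ℝ) < 2 := by nlinarith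
      have hk1' : (-1:ℤ) < k := by exact_mod_cast hk1
      have hk2' : k < 2 := by exact_mod_cast hk2
      omega
    have hsb := abs_le.1 hs'β
    rcases hk01 with h0 | h1
    · left
      refine ⟨⟨?_, ?_⟩, hθ⟩ <;> simp only [hs', h0] at hsb <;> push_cast at hsb <;>
        [linarith [hsb.1]; linarith [hsb.2]]
    · right
      refine ⟨⟨?_, ?_⟩, hθ⟩ <;> simp only [hs', h1] at hsb <;> push_cast at hsb <;>
        [linarith [hsb.1]; linarith [hsb.2]]
  refine lt_of_le_of_lt ((measure_mono hsub).trans (measure_union_le _ _)) ?_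
  have hm1 : volume (Icc (ψ - β) (ψ + β) ∩ Ioc 0 (2*π)) ≤
      ENNReal.ofReal (min (ψ + β) (2*π) - max (ψ - β) 0) := by
    refine (measure_mono (fun x hx => ?_)).trans_eq (Real.volume_Icc)
    exact ⟨max_le hx.1.1 hx.2.1.le, le_min hx.1.2 hx.2.2⟩
  have hm2 : volume (Icc (ψ + 2*π - β) (ψ + 2*π + β) ∩ Ioc 0 (2*π)) ≤
      ENNReal.ofReal (min (ψ + 2*π + β) (2*π) - max (ψ + 2*π - β) 0) := by
    refine (measure_mono (fun x hx => ?_)).trans_eq (Real.volume_Icc)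
    exact ⟨max_le hx.1.1 hx.2.1.le, le_min hx.1.2 hx.2.2⟩
  have key : ENNReal.ofReal (min (ψ + β) (2*π) - max (ψ - β) 0)
      + ENNReal.ofReal (min (ψ + 2*π + β) (2*π) - max (ψ + 2*π - β) 0)
      ≤ ENNReal.ofReal (2*β) := by
    rcases le_or_gt β ψ with hc | hc
    · have h2 : min (ψ + 2*π + β) (2*π) - max (ψ + 2*π - β) 0 ≤ 0 := by
        have a1 : 2*π ≤ max (ψ + 2*π - β) 0 := le_trans (by linarith) (le_max_left _ _)
        have a2 : min (ψ + 2*π + β) (2*π) ≤ 2*π := min_le_right _ _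
        linarith
      rw [ENNReal.ofReal_eq_zero.2 h2, add_zero]
      exact ENNReal.ofReal_le_ofReal (by
        have := min_le_left (ψ + β) (2*π)
        have := le_max_left (ψ - β) (0:ℝ)
        linarith)
    rcases le_or_gt ψ (-β) with hc2 | hc2
    · have h1 : min (ψ + β) (2*π) - max (ψ - β) 0 ≤ 0 := by
        have := min_le_left (ψ + β) (2*π)
        have := le_max_right (ψ - β) (0:ℝ)
        linarith
      rw [ENNReal.ofReal_eq_zero.2 h1, zero_add]
      exact ENNReal.ofReal_le_ofReal (by
        have := min_le_left (ψ + 2*π + β) (2*π)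
        have := le_max_left (ψ + 2*π - β) (0:ℝ)
        linarith)
    · have h1 : min (ψ + β) (2*π) - max (ψ - β) 0 ≤ ψ + β := by
        have := min_le_left (ψ + β) (2*π)
        have := le_max_right (ψ - β) (0:ℝ)
        linarith
      have h2 : min (ψ + 2*π + β) (2*π) - max (ψ + 2*π - β) 0 ≤ β - ψ := by
        have := min_le_right (ψ + 2*π + β) (2*π)
        have := le_max_left (ψ + 2*π - β) (0:ℝ)
        linarith
      calc ENNReal.ofReal (min (ψ + β) (2*π) - max (ψ - β) 0)
          + ENNReal.ofReal (min (ψ + 2*π + β) (2*π) - max (ψ + 2*π - β) 0)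
          ≤ ENNReal.ofReal (ψ + β) + ENNReal.ofReal (β - ψ) :=
            add_le_add (ENNReal.ofReal_le_ofReal h1) (ENNReal.ofReal_le_ofReal h2)
        _ = ENNReal.ofReal (2*β) := by
            rw [← ENNReal.ofReal_add (by linarith) (by linarith)]; ring_nf
  calc volume (Icc (ψ - β) (ψ + β) ∩ Ioc 0 (2*π))
      + volume (Icc (ψ + 2*π - β) (ψ + 2*π + β) ∩ Ioc 0 (2*π))
      ≤ _ := add_le_add hm1 hm2
    _ ≤ ENNReal.ofReal (2*β) := key
    _ < ENNReal.ofReal π := ENNReal.ofReal_lt_ofReal_iff hπ |>.2 (by linarith)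


lemma taylor_quadratic (φ : ℂ → ℝ) (hφ : ContDiff ℝ 2 φ) (x₀ : ℂ) :
    (fun w => φ (x₀ + w) - φ x₀ - fderiv ℝ φ x₀ w
        - (1/2) * fderiv ℝ (fderiv ℝ φ) x₀ w w) =o[𝓝 (0:ℂ)] fun w => ‖w‖^2 := by
  set L := fderiv ℝ φ x₀ with hLdef
  set B := fderiv ℝ (fderiv ℝ φ) x₀ with hBdef
  have hdφ : Differentiable ℝ φ := hφ.differentiable (by norm_num)
  have hdF : Differentiable ℝ (fderiv ℝ φ) :=
    (hφ.fderiv_right (m := 1) (by norm_num)).differentiable (by norm_num)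
  have hB : HasFDerivAt (fderiv ℝ φ) B x₀ := (hdF x₀).hasFDerivAt
  have hsymm : ∀ a b : ℂ, B a b = B b a :=
    fun a b => second_derivative_symmetric (fun y => (hdφ y).hasFDerivAt) hB a b
  -- derivative of g
  have hg : ∀ y : ℂ, HasFDerivAt
      (fun w => φ (x₀ + w) - φ x₀ - L w - (1/2) * B w w)
      (fderiv ℝ φ (x₀ + y) - L - B y) y := by
    intro y
    have h1 : HasFDerivAt (fun w : ℂ => φ (x₀ + w)) (fderiv ℝ φ (x₀ + y)) y := by
      have := (hdφ (x₀ + y)).hasFDerivAt.comp y ((hasFDerivAt_id y).const_add x₀)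
      simp only [ContinuousLinearMap.comp_id] at this; exact this
    have h2 : HasFDerivAt (fun w : ℂ => L w) L y := L.hasFDerivAt
    have h3 : HasFDerivAt (fun w : ℂ => B w w)
        ((B y).comp (ContinuousLinearMap.id ℝ ℂ) + B.flip y) y := by
      have := (B.hasFDerivAt (x := y)).clm_apply (hasFDerivAt_id y)
      simpa using this
    have h4 : HasFDerivAt (fun w : ℂ => (1/2 : ℝ) * B w w)
        ((1/2 : ℝ) • ((B y).comp (ContinuousLinearMap.id ℝ ℂ) + B.flip y)) y := h3.const_mul _
    have h5 := ((h1.sub_const (φ x₀)).sub h2).sub h4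
    refine h5.congr_fderiv ?_
    ext h
    simp [ContinuousLinearMap.smul_apply, ContinuousLinearMap.add_apply,
      ContinuousLinearMap.comp_apply, ContinuousLinearMap.flip_apply, hsymm h y]
    ring
  rw [Asymptotics.isLittleO_iff]
  intro ε hε
  have hlo := hB.isLittleO
  rw [Asymptotics.isLittleO_iff] at hlo
  have hev := hlo hε
  rw [Metric.eventually_nhds_iff] at hev
  obtain ⟨δ, hδ0, hδ⟩ := hev
  have hball : ∀ y : ℂ, ‖y‖ < δ → ‖fderiv ℝ φ (x₀ + y) - L - B y‖ ≤ ε * ‖y‖ := by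
    intro y hy
    have hd : dist (x₀ + y) x₀ < δ := by simpa [dist_eq_norm] using hy
    have h := hδ hd
    simpa [add_sub_cancel_left, hLdef] using h
  rw [Metric.eventually_nhds_iff]
  refine ⟨δ, hδ0, fun w hw => ?_⟩
  rw [dist_zero_right] at hw
  have hmvt := Convex.norm_image_sub_le_of_norm_hasFDerivWithin_le
    (f := fun w => φ (x₀ + w) - φ x₀ - L w - (1/2) * B w w)
    (f' := fun y => fderiv ℝ φ (x₀ + y) - L - B y)
    (s := closedBall (0:ℂ) ‖w‖) (C := ε * ‖w‖)
    (fun y hy => (hg y).hasFDerivWithinAt)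
    (fun y hy => by
      have hyw : ‖y‖ ≤ ‖w‖ := by simpa [dist_zero_right] using hy
      exact (hball y (lt_of_le_of_lt hyw hw)).trans
        (mul_le_mul_of_nonneg_left hyw hε.le))
    (convex_closedBall _ _)
    (mem_closedBall_self (norm_nonneg w))
    (mem_closedBall_zero_iff.2 le_rfl)
  simp only [add_zero, map_zero, mul_zero, sub_zero, ContinuousLinearMap.zero_apply, sub_self] at hmvt
  refine hmvt.trans_eq ?_
  rw [Real.norm_of_nonneg (by positivity : (0:ℝ) ≤ ‖w‖^2)]
  ring


theorem median_asymptotic_expansion (φ : ℂ → ℝ) (hφ : ContDiff ℝ 2 φ) (x₀ : ℂ)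
    (hD : fderiv ℝ φ x₀ ≠ 0) (v : ℂ) (hv : ‖v‖ = 1) (hvo : fderiv ℝ φ x₀ v = 0)
    (m : ℝ → ℝ) (hm : ∀ᶠ r in 𝓝[>] (0:ℝ), IsCircleMedian x₀ r φ (m r)) :
    (fun r : ℝ => m r - φ x₀ - r^2 / 2 * iteratedFDeriv ℝ 2 φ x₀ ![v, v])
      =o[𝓝[>] (0:ℝ)] fun r : ℝ => r^2 := by
  have hπ : (0:ℝ) < π := Real.pi_pos
  set L := fderiv ℝ φ x₀ with hLdef
  set B := fderiv ℝ (fderiv ℝ φ) x₀ with hBdef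
  set c : ℝ := L 1 with hcdef
  set d : ℝ := L Complex.I with hddef
  have hLx : ∀ x : ℂ, L x = x.re * c + x.im * d := by
    intro x
    have hx : x = x.re • (1:ℂ) + x.im • Complex.I := by
      simp [Complex.real_smul]
    nth_rewrite 1 [hx]
    rw [map_add, L.map_smul, L.map_smul, smul_eq_mul, smul_eq_mul]
  have hz : (↑c + ↑d * Complex.I) ≠ 0 := by
    intro h
    apply hD
    have hc0 : c = 0 := by
      have := congrArg Complex.re h
      simpa using this
    have hd0 : d = 0 := by
      have := congrArg Complex.im h
      simpa using this
    ext x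
    rw [hLx x, hc0, hd0]
    simp
  set a : ℝ := ‖(↑c + ↑d * Complex.I : ℂ)‖ with hadef
  have ha : 0 < a := norm_pos_iff.mpr hz
  set ψ : ℝ := Complex.arg (↑c + ↑d * Complex.I) with hψdef
  have hψπ : |ψ| ≤ π := Complex.abs_arg_le_pi _
  have hre : (↑c + ↑d * Complex.I).re = c := by simp
  have him : (↑c + ↑d * Complex.I).im = d := by simp
  have hcψ : c = a * Real.cos ψ := by
    have h := Complex.cos_arg hz
    rw [hre] at h
    rw [← hψdef, ← hadef] at h
    field_simp [ha.ne'] at h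
    linarith
  have hdψ : d = a * Real.sin ψ := by
    have h := Complex.sin_arg (↑c + ↑d * Complex.I)
    rw [him] at h
    rw [← hψdef, ← hadef] at h
    field_simp [ha.ne'] at h
    linarith
  have ha2 : a^2 = c^2 + d^2 := by
    rw [hadef, Complex.sq_norm, Complex.normSq_add_mul_I]
  set u₀ : ℂ := Complex.exp (↑ψ * Complex.I) with hu₀
  set u' : ℂ := u₀ * Complex.I with hu'
  have hnorm_e : ∀ θ : ℝ, ‖Complex.exp (↑θ * Complex.I)‖ = 1 := fun θ => by
    rw [Complex.norm_exp_ofReal_mul_I]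
  have hdecomp : ∀ θ : ℝ, Complex.exp (↑θ * Complex.I)
      = Real.cos (θ - ψ) • u₀ + Real.sin (θ - ψ) • u' := by
    intro θ
    have h1 : Complex.exp (↑θ * Complex.I)
        = u₀ * Complex.exp (↑(θ - ψ) * Complex.I) := by
      rw [hu₀, ← Complex.exp_add]
      congr 1
      push_cast
      ring
    rw [h1, Complex.exp_mul_I, ← Complex.ofReal_cos, ← Complex.ofReal_sin]
    simp only [Complex.real_smul, hu']
    ring
  have hLe : ∀ θ : ℝ, L (Complex.exp (↑θ * Complex.I)) = a * Real.cos (θ - ψ) := by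
    intro θ
    rw [hLx, Complex.exp_ofReal_mul_I_re, Complex.exp_ofReal_mul_I_im, hcψ, hdψ, Real.cos_sub]
    ring
  have hkerv : v.re * c + v.im * d = 0 := by
    rw [← hLx v]
    exact hvo
  have hu're : u'.re = -Real.sin ψ := by
    rw [hu', Complex.mul_I_re, hu₀, Complex.exp_ofReal_mul_I_im]
  have hu'im : u'.im = Real.cos ψ := by
    rw [hu', Complex.mul_I_im, hu₀, Complex.exp_ofReal_mul_I_re]
  have hra : u'.re * a = -d := by rw [hu're, hdψ]; ring
  have hia : u'.im * a = c := by rw [hu'im, hcψ]; ring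
  set α : ℝ := v.re * u'.re + v.im * u'.im with hα
  have hvα : v = α • u' := by
    have hre' : v.re = α * u'.re := by
      have key : (v.re - α * u'.re) * a^2 = 0 := by
        rw [hα]
        linear_combination v.re * ha2 + c * hkerv
          + (-(v.re*(u'.re*a - d)) - v.im*u'.im*a) * hra + (v.im*d) * hia
      have := mul_eq_zero.1 key
      rcases this with h | h
      · linarith
      · exact absurd h (by positivity)
    have him' : v.im = α * u'.im := by
      have key : (v.im - α * u'.im) * a^2 = 0 := by
        rw [hα]
        linear_combination v.im * ha2 + d * hkerv
          + (-(v.im*(u'.im*a + c)) + v.re*d) * hia + (-(v.re*u'.im*a)) * hra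
      have := mul_eq_zero.1 key
      rcases this with h | h
      · linarith
      · exact absurd h (by positivity)
    apply Complex.ext
    · rw [hre']; simp [Complex.real_smul]
    · rw [him']; simp [Complex.real_smul]
  have hu'n : ‖u'‖ = 1 := by
    rw [hu', norm_mul, Complex.norm_I, mul_one, hu₀, hnorm_e]
  have hα2 : α^2 = 1 := by
    have h1 : |α| = 1 := by
      rw [hvα, norm_smul, hu'n, mul_one, Real.norm_eq_abs] at hv
      exact hv
    rw [← sq_abs, h1, one_pow]
  set Q : ℝ := B u' u' with hQdef
  have hQv : B v v = Q := by
    have h1 : B (α • u') (α • u') = α * (α * (B u' u')) := by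
      rw [B.map_smul, ContinuousLinearMap.smul_apply, (B u').map_smul]
      simp [smul_eq_mul]
    rw [hvα, h1, ← mul_assoc, ← sq, hα2, one_mul]
  set K : ℝ := |B u₀ u₀| + |B u₀ u'| + |B u' u₀| + |Q| with hK
  have hK0 : 0 ≤ K := by positivity
  have hBee : ∀ θ : ℝ,
      |B (Complex.exp (↑θ * Complex.I)) (Complex.exp (↑θ * Complex.I)) - Q|
        ≤ |Real.cos (θ - ψ)| * K := by
    intro θ
    set cθ := Real.cos (θ - ψ) with hcθ
    set sθ := Real.sin (θ - ψ) with hsθ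
    have hexp : B (Complex.exp (↑θ * Complex.I)) (Complex.exp (↑θ * Complex.I))
        = cθ^2 * (B u₀ u₀) + cθ*sθ*(B u₀ u') + sθ*cθ*(B u' u₀) + sθ^2*Q := by
      rw [hdecomp θ]
      simp only [_root_.map_add, _root_.map_smul, ContinuousLinearMap.add_apply,
        ContinuousLinearMap.smul_apply, smul_eq_mul]
      ring
    have hs2 : sθ^2 = 1 - cθ^2 := by
      have := Real.sin_sq_add_cos_sq (θ - ψ)
      rw [← hcθ, ← hsθ] at this
      linarith
    have heq : B (Complex.exp (↑θ * Complex.I)) (Complex.exp (↑θ * Complex.I)) - Q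
        = cθ * (cθ * (B u₀ u₀) + sθ * (B u₀ u') + sθ * (B u' u₀) - cθ * Q) := by
      rw [hexp, hs2]; ring
    rw [heq, abs_mul]
    apply mul_le_mul_of_nonneg_left _ (abs_nonneg cθ)
    have hc1 : |cθ| ≤ 1 := Real.abs_cos_le_one _
    have hs1 : |sθ| ≤ 1 := Real.abs_sin_le_one _
    have t1 : |cθ * (B u₀ u₀)| ≤ |B u₀ u₀| := by
      rw [abs_mul]; exact mul_le_of_le_one_left (abs_nonneg _) hc1
    have t2 : |sθ * (B u₀ u')| ≤ |B u₀ u'| := by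
      rw [abs_mul]; exact mul_le_of_le_one_left (abs_nonneg _) hs1
    have t3 : |sθ * (B u' u₀)| ≤ |B u' u₀| := by
      rw [abs_mul]; exact mul_le_of_le_one_left (abs_nonneg _) hs1
    have t4 : |cθ * Q| ≤ |Q| := by
      rw [abs_mul]; exact mul_le_of_le_one_left (abs_nonneg _) hc1
    have h1 := abs_add_le (cθ * (B u₀ u₀)) (sθ * (B u₀ u'))
    have h2 := abs_add_le (cθ * (B u₀ u₀) + sθ * (B u₀ u')) (sθ * (B u' u₀))
    have h3 := abs_add_le (cθ * (B u₀ u₀) + sθ * (B u₀ u') + sθ * (B u' u₀)) (-(cθ * Q))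
    rw [abs_neg] at h3
    rw [hK]
    have heq2 : cθ * (B u₀ u₀) + sθ * (B u₀ u') + sθ * (B u' u₀) - cθ * Q
        = cθ * (B u₀ u₀) + sθ * (B u₀ u') + sθ * (B u' u₀) + -(cθ * Q) := by ring
    rw [heq2]
    linarith
  have hiter : iteratedFDeriv ℝ 2 φ x₀ ![v, v] = Q := by
    rw [iteratedFDeriv_two_apply]
    show B (![v,v] 0) (![v,v] 1) = Q
    simp only [Matrix.cons_val_zero, Matrix.cons_val_one, Matrix.head_cons]
    exact hQv
  simp only [hiter]
  clear_value Q K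
  have hvol : volume (Ioc (0:ℝ) (2*π)) / 2 = ENNReal.ofReal π := by
    rw [Real.volume_Ioc, sub_zero, show (2*π) = π*2 by ring,
      ENNReal.ofReal_mul hπ.le]
    simp only [ENNReal.ofReal_ofNat]
    rw [mul_div_assoc, ENNReal.div_self two_ne_zero ENNReal.ofNat_ne_top, mul_one]
  set ψ' : ℝ := if ψ ≤ 0 then ψ + π else ψ - π with hψ'def
  have hψ'π : |ψ'| ≤ π := by
    rw [hψ'def]
    rcases abs_le.1 hψπ with ⟨h1, h2⟩
    split_ifs with h
    · rw [abs_le]; constructor <;> linarith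
    · rw [abs_le]; push_neg at h; constructor <;> linarith
  have hcos' : ∀ θ : ℝ, Real.cos (θ - ψ') = -Real.cos (θ - ψ) := by
    intro θ
    rw [hψ'def]
    split_ifs with h
    · rw [show θ - (ψ + π) = θ - ψ - π by ring, Real.cos_sub, Real.cos_pi, Real.sin_pi]
      ring
    · rw [show θ - (ψ - π) = θ - ψ + π by ring, Real.cos_add, Real.cos_pi, Real.sin_pi]
      ring
  have htay := taylor_quadratic φ hφ x₀
  rw [Asymptotics.isLittleO_iff]
  intro ε hε
  rw [Asymptotics.isLittleO_iff] at htay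
  have h8 : (0:ℝ) < ε/8 := by linarith
  have hev := htay h8
  rw [Metric.eventually_nhds_iff] at hev
  obtain ⟨δ, hδ0, hδ⟩ := hev
  set c₀ : ℝ := min (ε / (2*(K+1))) 1 with hc₀def
  have hc₀0 : 0 < c₀ := lt_min (by positivity) one_pos
  have hc₀1 : c₀ ≤ 1 := min_le_right _ _
  have hKc₀ : K * c₀ ≤ ε/2 := by
    have h1 : c₀ ≤ ε/(2*(K+1)) := min_le_left _ _
    have h2 : K * c₀ ≤ K * (ε/(2*(K+1))) := mul_le_mul_of_nonneg_left h1 hK0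
    have hKp : (0:ℝ) < 2*(K+1) := by linarith
    have h3 : K * (ε/(2*(K+1))) * (2*(K+1)) ≤ ε/2 * (2*(K+1)) := by
      have e1 : K * (ε/(2*(K+1))) * (2*(K+1)) = K * ε := by field_simp
      have e2 : ε/2 * (2*(K+1)) = K*ε + ε := by ring
      rw [e1, e2]
      linarith only [hε]
    have h4 := le_of_mul_le_mul_right h3 hKp
    linarith only [h2, h4]
  clear_value c₀
  set δ' : ℝ := min δ (min (a/(ε+1)) (min (2*a*c₀/(K+1)) (2*a*c₀/ε))) with hδ'def
  have hδ'0 : 0 < δ' := lt_min hδ0 (lt_min (by positivity) (lt_min (by positivity) (by positivity)))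
  have hmem : Ioo (0:ℝ) δ' ∈ 𝓝[>] (0:ℝ) := Ioo_mem_nhdsGT_of_mem ⟨le_refl 0, hδ'0⟩
  filter_upwards [hm, hmem] with r hmed hr
  obtain ⟨hr0, hrδ'⟩ := hr
  have hrδ : r < δ := lt_of_lt_of_le hrδ' (min_le_left _ _)
  have hrE3 : r * ε < a := by
    have h1 : r < a/(ε+1) := lt_of_lt_of_le hrδ' ((min_le_right _ _).trans (min_le_left _ _))
    rw [lt_div_iff₀ (by positivity)] at h1
    have h2 : r*(ε+1) = r*ε + r := by ring
    linarith only [h1, h2, hr0]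
  have hrE4 : r * K ≤ 2*a*c₀ := by
    have h1 : r < 2*a*c₀/(K+1) := lt_of_lt_of_le hrδ'
      ((min_le_right _ _).trans ((min_le_right _ _).trans (min_le_left _ _)))
    rw [lt_div_iff₀ (by positivity)] at h1
    have h2 : r*(K+1) = r*K + r := by ring
    linarith only [h1, h2, hr0]
  have hrE5 : ε * r ≤ 2*a*c₀ := by
    have h1 : r < 2*a*c₀/ε := lt_of_lt_of_le hrδ'
      ((min_le_right _ _).trans ((min_le_right _ _).trans (min_le_right _ _)))
    rw [lt_div_iff₀ (by positivity)] at h1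
    have h2 : ε*r = r*ε := by ring
    linarith only [h1, h2]
  set t : ℝ := ε * r / (2*a) with htdef
  have ht0 : 0 < t := by positivity
  have ht1 : t ≤ 1 := by
    rw [htdef, div_le_one (by positivity)]
    have h2 : ε*r = r*ε := by ring
    linarith only [h2, hrE3, ha]
  have htc₀ : t ≤ c₀ := by
    rw [htdef, div_le_iff₀ (by positivity)]
    have h2 : c₀ * (2*a) = 2*a*c₀ := by ring
    linarith only [h2, hrE5]
  have hrat : r * a * t = ε * r^2 / 2 := by
    rw [htdef]; field_simp
  clear_value t
  have hpt : ∀ θ : ℝ, |φ (circleMap x₀ r θ) - φ x₀ - r * (a * Real.cos (θ-ψ))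
      - r^2/2 * (B (Complex.exp (↑θ * Complex.I)) (Complex.exp (↑θ * Complex.I)))|
      ≤ ε/8 * r^2 := by
    intro θ
    set e := Complex.exp (↑θ * Complex.I) with he
    have hw : circleMap x₀ r θ = x₀ + r • e := by
      simp [circleMap, Complex.real_smul, he]
    have hwn : ‖r • e‖ = r := by
      rw [norm_smul, hnorm_e, Real.norm_eq_abs, abs_of_pos hr0, mul_one]
    have hd : dist (r • e) (0:ℂ) < δ := by rw [dist_zero_right, hwn]; exact hrδ
    have h := hδ hd
    rw [hwn] at h
    have hLw : L (r • e) = r * (a * Real.cos (θ - ψ)) := by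
      rw [L.map_smul, smul_eq_mul, hLe]
    have hBw : B (r • e) (r • e) = r^2 * (B e e) := by
      rw [B.map_smul, ContinuousLinearMap.smul_apply, (B e).map_smul]
      simp only [smul_eq_mul]
      ring
    have hnn2 : ‖r^2‖ = r^2 := Real.norm_of_nonneg (sq_nonneg r)
    rw [hnn2] at h
    rw [← hLdef, hLw, hBw] at h
    rw [Real.norm_eq_abs] at h
    calc |φ (circleMap x₀ r θ) - φ x₀ - r * (a * Real.cos (θ-ψ)) - r^2/2 * (B e e)|
        = |φ (x₀ + r • e) - φ x₀ - r * (a * Real.cos (θ-ψ)) - 1/2 * (r^2 * (B e e))| := by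
          rw [hw]; ring_nf
      _ ≤ ε/8 * r^2 := h
  have hεr2 : (0:ℝ) < ε * r^2 := by positivity
  have hup : m r ≤ φ x₀ + r^2/2 * Q + ε * r^2 := by
    by_contra hcon
    push_neg at hcon
    have hsubT : {θ ∈ Ioc (0:ℝ) (2*π) | m r ≤ φ (circleMap x₀ r θ)}
        ⊆ {θ ∈ Ioc (0:ℝ) (2*π) | t ≤ Real.cos (θ - ψ)} := by
      rintro θ ⟨hθI, hθm⟩
      refine ⟨hθI, ?_⟩
      by_contra hlt
      push_neg at hlt
      have h1 := abs_le.1 (hpt θ)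
      set cθ := Real.cos (θ - ψ) with hcθ
      set E := B (Complex.exp (↑θ * Complex.I)) (Complex.exp (↑θ * Complex.I)) with hE
      have hE1 : |E - Q| ≤ |cθ| * K := hBee θ
      have hcθ1' : |cθ| ≤ 1 := by rw [hcθ]; exact Real.abs_cos_le_one _
      clear_value cθ E
      have hEb := abs_le.1 hE1
      have hcθ1 : |cθ| ≤ 1 := hcθ1'
      have hφc : φ (circleMap x₀ r θ) ≤ φ x₀ + r * (a * cθ) + r^2/2 * E + ε/8 * r^2 := by
        linarith only [h1.2]
      have hrat2 : r * (a * t) = ε * r^2 / 2 := by rw [← hrat]; ring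
      rcases le_or_gt (-c₀) cθ with hcase | hcase
      · have habs : |cθ| ≤ c₀ := abs_le.2 ⟨hcase, le_trans hlt.le htc₀⟩
        have hEQ : E ≤ Q + ε/2 := by
          have h2 : |cθ| * K ≤ c₀ * K := mul_le_mul_of_nonneg_right habs hK0
          have h3 : c₀ * K = K * c₀ := mul_comm _ _
          linarith only [hEb.2, h2, h3, hKc₀]
        have hEQ' : r^2/2 * E ≤ r^2/2 * (Q + ε/2) :=
          mul_le_mul_of_nonneg_left hEQ (by positivity)
        have hEQ'' : r^2/2 * (Q + ε/2) = r^2/2 * Q + ε * r^2/4 := by ring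
        have hcc : r * (a * cθ) ≤ r * (a * t) :=
          mul_le_mul_of_nonneg_left (mul_le_mul_of_nonneg_left hlt.le ha.le) hr0.le
        have hfin : φ (circleMap x₀ r θ) < m r := by
          linarith only [hφc, hcc, hrat2, hEQ', hEQ'', hcon, hεr2]
        linarith only [hfin, hθm]
      · have hEQ : E ≤ Q + K := by
          have h2 : |cθ| * K ≤ K := mul_le_of_le_one_left hK0 hcθ1
          linarith only [hEb.2, h2]
        have hEQ' : r^2/2 * E ≤ r^2/2 * (Q + K) :=
          mul_le_mul_of_nonneg_left hEQ (by positivity)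
        have hEQ'' : r^2/2 * (Q + K) = r^2/2 * Q + r * (r * K)/2 := by ring
        have hcc : r * (a * cθ) ≤ r * (a * (-c₀)) :=
          mul_le_mul_of_nonneg_left (mul_le_mul_of_nonneg_left hcase.le ha.le) hr0.le
        have hcc2 : r * (a * (-c₀)) = -(r * (2*a*c₀))/2 := by ring
        have h5 : r * (r * K) ≤ r * (2*a*c₀) := mul_le_mul_of_nonneg_left hrE4 hr0.le
        have hfin : φ (circleMap x₀ r θ) < m r := by
          linarith only [hφc, hcc, hcc2, hEQ', hEQ'', h5, hcon, hεr2]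
        linarith only [hfin, hθm]
    have hπle : ENNReal.ofReal π ≤ volume {θ ∈ Ioc (0:ℝ) (2*π) | t ≤ Real.cos (θ - ψ)} := by
      calc ENNReal.ofReal π = volume (Ioc (0:ℝ) (2*π)) / 2 := hvol.symm
        _ ≤ volume {θ ∈ Ioc (0:ℝ) (2*π) | m r ≤ φ (circleMap x₀ r θ)} := hmed.1
        _ ≤ _ := measure_mono hsubT
    exact absurd hπle (not_le.2 (measure_cos_ge_lt hψπ ht0 ht1))
  have hlow : φ x₀ + r^2/2 * Q - ε * r^2 ≤ m r := by
    by_contra hcon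
    push_neg at hcon
    have hsubT : {θ ∈ Ioc (0:ℝ) (2*π) | φ (circleMap x₀ r θ) ≤ m r}
        ⊆ {θ ∈ Ioc (0:ℝ) (2*π) | t ≤ Real.cos (θ - ψ')} := by
      rintro θ ⟨hθI, hθm⟩
      refine ⟨hθI, ?_⟩
      by_contra hlt
      push_neg at hlt
      rw [hcos'] at hlt
      have h1 := abs_le.1 (hpt θ)
      set cθ := Real.cos (θ - ψ) with hcθ
      set E := B (Complex.exp (↑θ * Complex.I)) (Complex.exp (↑θ * Complex.I)) with hE
      have hE1 : |E - Q| ≤ |cθ| * K := hBee θ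
      have hcθ1' : |cθ| ≤ 1 := by rw [hcθ]; exact Real.abs_cos_le_one _
      clear_value cθ E
      have hEb := abs_le.1 hE1
      have hcθ1 : |cθ| ≤ 1 := hcθ1'
      have hgt : -t < cθ := by linarith only [hlt]
      have hφc : φ x₀ + r * (a * cθ) + r^2/2 * E - ε/8 * r^2 ≤ φ (circleMap x₀ r θ) := by
        linarith only [h1.1]
      have hrat2 : r * (a * t) = ε * r^2 / 2 := by rw [← hrat]; ring
      rcases le_or_gt cθ c₀ with hcase | hcase
      · have habs : |cθ| ≤ c₀ := abs_le.2 ⟨by linarith, hcase⟩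
        have hEQ : Q - ε/2 ≤ E := by
          have h2 : |cθ| * K ≤ c₀ * K := mul_le_mul_of_nonneg_right habs hK0
          have h3 : c₀ * K = K * c₀ := mul_comm _ _
          linarith only [hEb.1, h2, h3, hKc₀]
        have hEQ' : r^2/2 * (Q - ε/2) ≤ r^2/2 * E :=
          mul_le_mul_of_nonneg_left hEQ (by positivity)
        have hEQ'' : r^2/2 * (Q - ε/2) = r^2/2 * Q - ε * r^2/4 := by ring
        have hcc : r * (a * (-t)) ≤ r * (a * cθ) :=
          mul_le_mul_of_nonneg_left (mul_le_mul_of_nonneg_left hgt.le ha.le) hr0.le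
        have hcc2 : r * (a * (-t)) = -(r * (a * t)) := by ring
        have hfin : m r < φ (circleMap x₀ r θ) := by
          linarith only [hφc, hcc, hcc2, hrat2, hEQ', hEQ'', hcon, hεr2]
        linarith only [hfin, hθm]
      · have hEQ : Q - K ≤ E := by
          have h2 : |cθ| * K ≤ K := mul_le_of_le_one_left hK0 hcθ1
          linarith only [hEb.1, h2]
        have hEQ' : r^2/2 * (Q - K) ≤ r^2/2 * E :=
          mul_le_mul_of_nonneg_left hEQ (by positivity)
        have hEQ'' : r^2/2 * (Q - K) = r^2/2 * Q - r * (r * K)/2 := by ring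
        have hcc : r * (a * c₀) ≤ r * (a * cθ) :=
          mul_le_mul_of_nonneg_left (mul_le_mul_of_nonneg_left hcase.le ha.le) hr0.le
        have hcc2 : r * (a * c₀) = r * (2*a*c₀)/2 := by ring
        have h5 : r * (r * K) ≤ r * (2*a*c₀) := mul_le_mul_of_nonneg_left hrE4 hr0.le
        have hfin : m r < φ (circleMap x₀ r θ) := by
          linarith only [hφc, hcc, hcc2, hEQ', hEQ'', h5, hcon, hεr2]
        linarith only [hfin, hθm]
    have hπle : ENNReal.ofReal π ≤ volume {θ ∈ Ioc (0:ℝ) (2*π) | t ≤ Real.cos (θ - ψ')} := by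
      calc ENNReal.ofReal π = volume (Ioc (0:ℝ) (2*π)) / 2 := hvol.symm
        _ ≤ volume {θ ∈ Ioc (0:ℝ) (2*π) | φ (circleMap x₀ r θ) ≤ m r} := hmed.2
        _ ≤ _ := measure_mono hsubT
    exact absurd hπle (not_le.2 (measure_cos_ge_lt hψ'π ht0 ht1))
  have hnn : ‖r^2‖ = r^2 := Real.norm_of_nonneg (sq_nonneg r)
  rw [Real.norm_eq_abs, hnn]
  rw [abs_le]
  constructor
  · linarith only [hlow]
  · linarith only [hup]
end

section
/- Let Ω ⊂ ℝ² be open and let u : Ω → ℝ be continuous with the local median value property. Then u is a viscosity supersolution of −Δ₁u = 0: whenever x₀ ∈ Ω and φ ∈ C²(Ω) satisfy φ(x₀) = u(x₀), φ(x) < u(x) for x ≠ x₀, and Dφ(x₀) ≠ 0, then −Δ₁φ(x₀) ≥ 0. -/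
open MeasureTheory Set Metric Real Filter Topology

private lemma sin_lower {δ β : ℝ} (hδ : 0 < δ) (hδ' : δ ≤ π/2) (h1 : δ ≤ β) (h2 : β ≤ π - δ) :
    Real.sin δ ≤ Real.sin β := by
  have hπ := Real.pi_pos
  rcases le_total β (π/2) with h | h
  · exact Real.strictMonoOn_sin.monotoneOn ⟨by linarith, hδ'⟩ ⟨by linarith, h⟩ h1
  · rw [← Real.sin_pi_sub β]
    exact Real.strictMonoOn_sin.monotoneOn ⟨by linarith, hδ'⟩ ⟨by linarith, by linarith⟩ (by linarith)

private lemma volume_inter_Ioc_translate {A : Set ℝ} (hA : MeasurableSet A)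
    (hper : ∀ θ, θ + 2 * π ∈ A ↔ θ ∈ A) {t : ℝ} (h0 : 0 ≤ t) (h2 : t ≤ 2 * π) :
    volume (A ∩ Ioc 0 (2 * π)) = volume (A ∩ Ioc t (t + 2 * π)) := by
  have m2 : MeasurableSet (A ∩ Ioc t (2 * π)) := hA.inter measurableSet_Ioc
  have m3 : MeasurableSet (A ∩ Ioc (2 * π) (t + 2 * π)) := hA.inter measurableSet_Ioc
  have e1 : A ∩ Ioc 0 (2 * π) = (A ∩ Ioc 0 t) ∪ (A ∩ Ioc t (2 * π)) := by
    rw [← inter_union_distrib_left, Ioc_union_Ioc_eq_Ioc h0 h2]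
  have e2 : A ∩ Ioc t (t + 2 * π) = (A ∩ Ioc t (2 * π)) ∪ (A ∩ Ioc (2 * π) (t + 2 * π)) := by
    rw [← inter_union_distrib_left, Ioc_union_Ioc_eq_Ioc h2 (by linarith : (2*π) ≤ t + 2*π)]
  have e3 : volume (A ∩ Ioc (2 * π) (t + 2 * π)) = volume (A ∩ Ioc 0 t) := by
    have hpre : (fun x => x + 2 * π) ⁻¹' (A ∩ Ioc (2 * π) (t + 2 * π)) = A ∩ Ioc 0 t := by
      ext x
      simp only [mem_preimage, mem_inter_iff, mem_Ioc, hper]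
      constructor
      · rintro ⟨hx, ha, hb⟩; exact ⟨hx, by linarith, by linarith⟩
      · rintro ⟨hx, ha, hb⟩; exact ⟨hx, by linarith, by linarith⟩
    rw [← hpre, measure_preimage_add_right]
  have d1 : Disjoint (A ∩ Ioc 0 t) (A ∩ Ioc t (2 * π)) := by
    apply Set.disjoint_of_subset inter_subset_right inter_subset_right
    rw [Set.Ioc_disjoint_Ioc]
    exact min_le_of_left_le (le_max_right _ _)
  have d2 : Disjoint (A ∩ Ioc t (2 * π)) (A ∩ Ioc (2 * π) (t + 2 * π)) := by
    apply Set.disjoint_of_subset inter_subset_right inter_subset_right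
    rw [Set.Ioc_disjoint_Ioc]
    exact min_le_of_left_le (le_max_right _ _)
  rw [e1, e2, measure_union d1 m2, measure_union d2 m3, e3, add_comm]


private lemma taylor2 {φ : ℂ → ℝ} (hφ : ContDiff ℝ 2 φ) (x₀ : ℂ) {ε : ℝ} (hε : 0 < ε) :
    ∃ rT > 0, ∀ w : ℂ, ‖w‖ < rT →
      |φ (x₀ + w) - φ x₀ - fderiv ℝ φ x₀ w - fderiv ℝ (fderiv ℝ φ) x₀ w w / 2| ≤ ε * ‖w‖ ^ 2 := by
  set f' := fderiv ℝ φ with hf'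
  set B := fderiv ℝ f' x₀ with hB
  have hf'c1 : ContDiff ℝ 1 f' := hφ.fderiv_right (by norm_num)
  have hBd : HasFDerivAt f' B x₀ := ((hf'c1.differentiable (by norm_num)) x₀).hasFDerivAt
  have hlo := hasFDerivAt_iff_isLittleO_nhds_zero.1 hBd
  have hev : ∀ᶠ h in 𝓝 (0:ℂ), ‖f' (x₀ + h) - f' x₀ - B h‖ ≤ ε * ‖h‖ :=
    hlo.bound hε
  rcases Metric.eventually_nhds_iff.1 hev with ⟨rT, hrT, hball⟩
  refine ⟨rT, hrT, fun w hw => ?_⟩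
  have hφd : Differentiable ℝ φ := hφ.differentiable (by norm_num)
  set g : ℝ → ℝ := fun t => φ (x₀ + t • w) - t * (f' x₀ w) - t ^ 2 / 2 * (B w w) with hg
  have hgd : ∀ t : ℝ, HasDerivAt g (f' (x₀ + t • w) w - f' x₀ w - t * (B w w)) t := by
    intro t
    have h1 : HasDerivAt (fun s : ℝ => x₀ + s • w) w t := by
      simpa using ((hasDerivAt_id t).smul_const w).const_add x₀
    have h2 : HasDerivAt (fun s : ℝ => φ (x₀ + s • w)) (f' (x₀ + t • w) w) t :=
      (hφd (x₀ + t • w)).hasFDerivAt.comp_hasDerivAt t h1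
    have h3 : HasDerivAt (fun s : ℝ => s * (f' x₀ w)) (f' x₀ w) t := by
      simpa using (hasDerivAt_id t).mul_const (f' x₀ w)
    have h4 : HasDerivAt (fun s : ℝ => s ^ 2 / 2 * (B w w)) (t * (B w w)) t := by
      have := ((hasDerivAt_pow 2 t).div_const 2).mul_const (B w w)
      refine this.congr_deriv ?_
      ring
    exact (h2.sub h3).sub h4
  have key : ∀ t ∈ Icc (0:ℝ) 1, ‖f' (x₀ + t • w) w - f' x₀ w - t * (B w w)‖ ≤ ε * ‖w‖ ^ 2 := by
    intro t ht
    have e1 : f' (x₀ + t • w) w - f' x₀ w - t * (B w w)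
        = (f' (x₀ + t • w) - f' x₀ - B (t • w)) w := by
      rw [ContinuousLinearMap.sub_apply, ContinuousLinearMap.sub_apply, B.map_smul,
        ContinuousLinearMap.smul_apply, smul_eq_mul]
    rw [e1]
    have htw : ‖t • w‖ ≤ ‖w‖ := by
      rw [norm_smul]
      calc ‖t‖ * ‖w‖ ≤ 1 * ‖w‖ := by
            gcongr
            rw [Real.norm_eq_abs, abs_of_nonneg ht.1]
            exact ht.2
        _ = ‖w‖ := one_mul _
    calc ‖(f' (x₀ + t • w) - f' x₀ - B (t • w)) w‖
        ≤ ‖f' (x₀ + t • w) - f' x₀ - B (t • w)‖ * ‖w‖ := ContinuousLinearMap.le_opNorm _ _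
      _ ≤ (ε * ‖t • w‖) * ‖w‖ := by
          gcongr
          exact hball (by simpa [dist_eq_norm] using lt_of_le_of_lt htw hw)
      _ ≤ (ε * ‖w‖) * ‖w‖ := by gcongr
      _ = ε * ‖w‖ ^ 2 := by ring
  have hmvt := norm_image_sub_le_of_norm_deriv_le_segment'
      (fun t (ht : t ∈ Icc (0:ℝ) 1) => (hgd t).hasDerivWithinAt)
      (fun t ht => key t (Ico_subset_Icc_self ht)) 1 (right_mem_Icc.2 zero_le_one)
  have hg1 : g 1 = φ (x₀ + w) - f' x₀ w - B w w / 2 := by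
    simp [hg]
    ring
  have hg0 : g 0 = φ x₀ := by simp [hg]
  rw [hg1, hg0] at hmvt
  calc |φ (x₀ + w) - φ x₀ - f' x₀ w - B w w / 2|
      = ‖φ (x₀ + w) - f' x₀ w - B w w / 2 - φ x₀‖ := by rw [Real.norm_eq_abs]; ring_nf
    _ ≤ ε * ‖w‖ ^ 2 * (1 - 0) := hmvt
    _ = ε * ‖w‖ ^ 2 := by ring

set_option maxHeartbeats 1000000 in
private lemma key_aux (Ω : Set ℂ) (u : ℂ → ℝ) (hlmvp : HasLMVP Ω u)
    (x₀ : ℂ) (hx₀ : x₀ ∈ Ω) (φ : ℂ → ℝ) (hφ : ContDiff ℝ 2 φ)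
    (htouch : φ x₀ = u x₀) (hbelow : ∀ x ∈ Ω, x ≠ x₀ → φ x < u x)
    (v : ℂ) (hv : ‖v‖ = 1) (hvo : fderiv ℝ φ x₀ v = 0)
    (hc : 0 < fderiv ℝ φ x₀ (Complex.I * v))
    (hq : 0 < fderiv ℝ (fderiv ℝ φ) x₀ v v) : False := by
  obtain ⟨R, hRcont, hRpos, hmed⟩ := hlmvp
  obtain ⟨L, hL⟩ : ∃ L' : ℂ →L[ℝ] ℝ, fderiv ℝ φ x₀ = L' := ⟨_, rfl⟩
  obtain ⟨B, hBdef⟩ : ∃ B' : ℂ →L[ℝ] ℂ →L[ℝ] ℝ, fderiv ℝ (fderiv ℝ φ) x₀ = B' := ⟨_, rfl⟩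
  rw [hL] at hvo hc
  rw [hBdef] at hq
  set c := L (Complex.I * v) with hcdef
  set q := B v v with hqdef
  have hπ := Real.pi_pos
  -- φ ≤ u on Ω
  have hφle : ∀ x ∈ Ω, φ x ≤ u x := by
    intro x hx
    by_cases hxx : x = x₀
    · subst hxx; exact le_of_eq htouch
    · exact (hbelow x hx hxx).le
  -- the circle direction function
  set z : ℝ → ℂ := fun β => v * Complex.exp (β * Complex.I) with hz
  set G : ℝ → ℝ := fun β => B (z β) (z β) with hG
  have hznorm : ∀ β, ‖z β‖ = 1 := by
    intro β
    rw [hz]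
    simp [Complex.norm_exp_ofReal_mul_I, hv]
  have hGper : ∀ β, G (β + π) = G β := by
    intro β
    have hzper : z (β + π) = -z β := by
      simp only [hz]
      push_cast
      rw [add_mul, Complex.exp_add, Complex.exp_pi_mul_I]
      ring
    simp [hG, hzper]
  have hG0 : G 0 = q := by simp [hG, hz, hqdef]
  have hM : ∀ β, ‖G β‖ ≤ ‖B‖ := by
    intro β
    calc ‖G β‖ ≤ ‖B (z β)‖ * ‖z β‖ := (B (z β)).le_opNorm _
      _ ≤ (‖B‖ * ‖z β‖) * ‖z β‖ := by gcongr; exact B.le_opNorm _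
      _ = ‖B‖ := by rw [hznorm]; ring
  have hzc : Continuous z := by
    apply continuous_const.mul
    exact Complex.continuous_exp.comp (Complex.continuous_ofReal.mul continuous_const)
  have hGcont : Continuous G := by
    exact isBoundedBilinearMap_apply.continuous.comp ((B.continuous.comp hzc).prodMk hzc)
  obtain ⟨δ₀, hδ₀pos, hδ₀⟩ := Metric.continuousAt_iff.1 hGcont.continuousAt (q/2) (by positivity)
  set δ : ℝ := min δ₀ (π/2) with hδdef
  have hδpos : 0 < δ := lt_min hδ₀pos (by positivity)
  have hδπ : δ ≤ π/2 := min_le_right _ _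
  have hGbig : ∀ β, |β| < δ → q/2 < G β := by
    intro β hβ
    have := hδ₀ (show dist β 0 < δ₀ by rw [Real.dist_eq, sub_zero]; exact lt_of_lt_of_le hβ (min_le_left _ _))
    rw [Real.dist_eq, hG0] at this
    cases abs_lt.1 this with
    | intro h1 h2 => linarith
  -- Taylor radius
  obtain ⟨rT, hrTpos, hT⟩ := taylor2 hφ x₀ (show (0:ℝ) < q/8 by positivity)
  simp only [hL, hBdef] at hT
  -- decomposition of z
  have hzdecomp : ∀ β : ℝ, z β = (Real.cos β) • v + (Real.sin β) • (Complex.I * v) := by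
    intro β
    simp only [hz]
    rw [Complex.exp_mul_I, ← Complex.ofReal_cos, ← Complex.ofReal_sin,
      Complex.real_smul, Complex.real_smul]
    ring
  have hLz : ∀ β : ℝ, L (z β) = Real.sin β * c := by
    intro β
    rw [hzdecomp β, map_add, L.map_smul, L.map_smul, hvo]
    simp [smul_eq_mul, hcdef]
  -- angle of v
  have hve : Complex.exp ((Complex.arg v : ℂ) * Complex.I) = v := by
    have h1 := Complex.norm_mul_exp_arg_mul_I v
    have h2 : ‖v‖ = 1 := hv
    rwa [h2, Complex.ofReal_one, one_mul] at h1
  set t' : ℝ := toIcoMod Real.two_pi_pos 0 (Complex.arg v - π) with ht'def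
  have ht'mem : t' ∈ Ico 0 (2*π) := toIcoMod_mem_Ico' Real.two_pi_pos _
  set k : ℤ := toIcoDiv Real.two_pi_pos 0 (Complex.arg v - π) with hkdef
  have hk : t' = Complex.arg v - π - (k : ℝ) * (2*π) := by
    rw [ht'def, toIcoMod, zsmul_eq_mul, hkdef]
  have hexp : ∀ θ : ℝ, Complex.exp ((θ : ℂ) * Complex.I) = z (θ - t' - π) := by
    intro θ
    simp only [hz]
    rw [← hve, ← Complex.exp_add,
      show (Complex.arg v : ℂ) * Complex.I + ((θ - t' - π : ℝ) : ℂ) * Complex.I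
         = (θ : ℂ) * Complex.I + (k : ℂ) * (2 * (π : ℂ) * Complex.I) by push_cast [hk]; ring,
      Complex.exp_add, Complex.exp_int_mul_two_pi_mul_I, mul_one]
  -- choose r
  have hsinδ : 0 < Real.sin δ :=
    Real.sin_pos_of_pos_of_lt_pi hδpos (lt_of_le_of_lt hδπ (by linarith))
  set k₀ : ℝ := q/(8*c) with hk₀def
  have hk₀pos : 0 < k₀ := by positivity
  have hgen : ∀ a b : ℝ, 0 < b → ∀ᶠ r in 𝓝[>] (0:ℝ), a * r < b := by
    intro a b hb
    have h1 : Tendsto (fun r : ℝ => a * r) (𝓝 0) (𝓝 (a * 0)) := tendsto_id.const_mul a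
    rw [mul_zero] at h1
    exact (h1.eventually_lt_const hb).filter_mono nhdsWithin_le_nhds
  obtain ⟨r, hr0, hrR, hrT, hr1, hr2⟩ : ∃ r : ℝ, 0 < r ∧ r < R x₀ ∧ r < rT ∧
      (‖B‖/2 + q/8) * r < c * Real.sin δ ∧ k₀ * r < δ := by
    have e0 : ∀ᶠ r in 𝓝[>] (0:ℝ), 0 < r := eventually_mem_nhdsWithin.mono (fun r hr => hr)
    have e1 := hgen 1 (R x₀) (hRpos x₀ hx₀).1
    have e2 := hgen 1 rT hrTpos
    have e3 := hgen (‖B‖/2 + q/8) (c * Real.sin δ) (by positivity)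
    have e4 := hgen k₀ δ hδpos
    obtain ⟨r, h0, h1, h2, h3, h4⟩ := (e0.and (e1.and (e2.and (e3.and e4)))).exists
    exact ⟨r, h0, by linarith, by linarith, h3, h4⟩
  -- all circle points are in Ω
  have hmem : ∀ θ : ℝ, circleMap x₀ r θ ∈ Ω := by
    intro θ
    by_contra hmemc
    have h1 : Metric.infDist x₀ Ωᶜ ≤ dist x₀ (circleMap x₀ r θ) :=
      Metric.infDist_le_dist_of_mem hmemc
    have h2 : dist x₀ (circleMap x₀ r θ) = r := by
      rw [dist_comm]
      exact mem_sphere.1 (circleMap_mem_sphere x₀ hr0.le θ)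
    have := (hRpos x₀ hx₀).2
    rw [h2] at h1
    linarith
  -- the sublevel set
  set A : Set ℝ := {θ | φ (circleMap x₀ r θ) ≤ φ x₀} with hAdef
  have hAmeas : MeasurableSet A := by
    have : IsClosed A :=
      isClosed_le ((hφ.continuous).comp (continuous_circleMap x₀ r)) continuous_const
    exact this.measurableSet
  have hAper : ∀ θ, θ + 2*π ∈ A ↔ θ ∈ A := by
    intro θ
    simp only [hAdef, mem_setOf_eq, (periodic_circleMap x₀ r) θ]
  -- the median inequality
  have hmed' := (hmed x₀ hx₀ r hr0 hrR.le).2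
  have hsub : {θ ∈ Ioc (0:ℝ) (2*π) | u (circleMap x₀ r θ) ≤ u x₀} ⊆ A ∩ Ioc 0 (2*π) := by
    rintro θ ⟨hθI, hθu⟩
    refine ⟨?_, hθI⟩
    have h1 := hφle _ (hmem θ)
    simp only [hAdef, mem_setOf_eq]
    linarith [htouch.le, htouch.ge]
  have hIocvol : volume (Ioc (0:ℝ) (2*π)) / 2 = ENNReal.ofReal π := by
    rw [Real.volume_Ioc, sub_zero, show (2*π) = π * 2 by ring, ENNReal.ofReal_mul pi_pos.le,
      ENNReal.ofReal_ofNat, mul_div_assoc, ENNReal.div_self (by norm_num) (by norm_num), mul_one]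
  have hhalf : ENNReal.ofReal π ≤ volume (A ∩ Ioc 0 (2*π)) := by
    rw [← hIocvol]
    exact le_trans hmed' (measure_mono hsub)
  have htrans : volume (A ∩ Ioc 0 (2*π)) = volume (A ∩ Ioc t' (t' + 2*π)) :=
    volume_inter_Ioc_translate hAmeas hAper ht'mem.1 ht'mem.2.le
  -- c * k₀ = q / 8
  have hckr : c * (k₀ * r) = q / 8 * r := by
    have : c * k₀ = q / 8 := by rw [hk₀def]; field_simp
    calc c * (k₀ * r) = (c * k₀) * r := by ring
      _ = q / 8 * r := by rw [this]
  -- the containment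
  have hcont : A ∩ Ioc t' (t' + 2*π) ⊆ Icc (t' + k₀ * r) (t' + π - k₀ * r) := by
    rintro θ ⟨hθA, hθI⟩
    set β : ℝ := θ - t' - π with hβdef
    have hβ1 : -π < β := by simp only [hβdef]; linarith [hθI.1]
    have hβ2 : β ≤ π := by simp only [hβdef]; linarith [hθI.2]
    have hw : circleMap x₀ r θ = x₀ + (r : ℝ) • z β := by
      rw [circleMap, hexp θ, Complex.real_smul]
    have hwnorm : ‖(r : ℝ) • z β‖ = r := by
      rw [norm_smul, hznorm, Real.norm_eq_abs, abs_of_nonneg hr0.le, mul_one]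
    have hTa := hT ((r : ℝ) • z β) (by rw [hwnorm]; exact hrT)
    have hLw : L ((r : ℝ) • z β) = r * (Real.sin β * c) := by
      rw [L.map_smul, hLz β, smul_eq_mul]
    have hBw : B ((r : ℝ) • z β) ((r : ℝ) • z β) = r * (r * G β) := by
      rw [B.map_smul, ContinuousLinearMap.smul_apply, (B (z β)).map_smul,
        smul_eq_mul, smul_eq_mul]
    have hφθ : φ (x₀ + (r : ℝ) • z β) ≤ φ x₀ := by rw [← hw]; exact hθA
    rw [hLw, hBw, hwnorm] at hTa
    have habs := (abs_le.1 hTa).1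
    have hineq : c * Real.sin β ≤ r * (q / 8) - r * (G β / 2) := by
      rw [← mul_le_mul_iff_right₀ hr0]
      linarith [habs, hφθ]
    -- goal in terms of β
    suffices hgoal : -π + k₀ * r ≤ β ∧ β ≤ -(k₀ * r) by
      constructor
      · simp only [hβdef] at hgoal; linarith [hgoal.1]
      · simp only [hβdef] at hgoal; linarith [hgoal.2]
    rcases lt_or_ge |β| δ with hcase1 | hrest
    · -- near v
      have hGb := hGbig β hcase1
      have hs : Real.sin β ≤ -(k₀ * r) := by
        rw [← mul_le_mul_iff_right₀ hc]
        linarith [hineq, mul_lt_mul_of_pos_left hGb hr0, hckr]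
      have hβneg : β < 0 := by
        by_contra hβnn
        push_neg at hβnn
        have : 0 ≤ Real.sin β := Real.sin_nonneg_of_nonneg_of_le_pi hβnn hβ2
        linarith [mul_pos hk₀pos hr0]
      have habsβ := abs_lt.1 hcase1
      constructor
      · linarith [habsβ.1, hr2, hδπ]
      · linarith [Real.le_sin hβneg.le, hs]
    rcases lt_or_ge |β - π| δ with hcase2 | hrest2
    · -- near -v (upper side): impossible
      exfalso
      have hGb : q/2 < G β := by
        have := hGbig (β - π) hcase2
        rwa [← hGper (β - π), sub_add_cancel] at this
      have hs : Real.sin β ≤ -(k₀ * r) := by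
        rw [← mul_le_mul_iff_right₀ hc]
        linarith [hineq, mul_lt_mul_of_pos_left hGb hr0, hckr]
      have habsβ := abs_lt.1 hcase2
      have h0β : 0 ≤ β := by linarith [habsβ.1, hδπ]
      have : 0 ≤ Real.sin β := Real.sin_nonneg_of_nonneg_of_le_pi h0β hβ2
      linarith [mul_pos hk₀pos hr0]
    rcases lt_or_ge |β + π| δ with hcase3 | hrest3
    · -- near -v (lower side)
      have hGb : q/2 < G β := by
        have := hGbig (β + π) hcase3
        rwa [hGper β] at this
      have hs : Real.sin β ≤ -(k₀ * r) := by
        rw [← mul_le_mul_iff_right₀ hc]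
        linarith [hineq, mul_lt_mul_of_pos_left hGb hr0, hckr]
      have habsβ := abs_lt.1 hcase3
      have hsin : Real.sin β = -Real.sin (β + π) := by
        rw [Real.sin_add_pi, neg_neg]
      have hsβπ : k₀ * r ≤ Real.sin (β + π) := by rw [hsin] at hs; linarith
      have hstep : k₀ * r ≤ β + π :=
        le_trans hsβπ (Real.sin_le (by linarith [habsβ.1]))
      constructor
      · linarith
      · linarith [habsβ.2, hδπ, hr2]
    · -- the far region
      have hcoarse : Real.sin β < Real.sin δ := by
        have hMb := hM β
        rw [Real.norm_eq_abs] at hMb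
        have h1 := (abs_le.1 hMb).1
        have h2 : c * Real.sin β < c * Real.sin δ := by
          linarith [hineq, mul_le_mul_of_nonneg_left h1 hr0.le, hr1]
        exact (mul_lt_mul_iff_right₀ hc).1 h2
      have hβout : β ∉ Icc δ (π - δ) := by
        rintro ⟨hβa, hβb⟩
        exact absurd (sin_lower hδpos hδπ hβa hβb) (not_le.2 hcoarse)
      have hβub : β ≤ π - δ := by
        rcases le_abs.1 hrest2 with h' | h'
        · linarith [hβ2]
        · linarith
      have hβle : β ≤ -δ := by
        rcases le_abs.1 hrest with h' | h'
        · exact absurd ⟨h', hβub⟩ hβout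
        · linarith
      constructor
      · have : δ ≤ β + π := by
          rcases le_abs.1 hrest3 with h' | h'
          · exact h'
          · linarith
        linarith [hr2]
      · linarith [hr2]
  -- conclude
  have hfin : volume (A ∩ Ioc t' (t' + 2*π)) ≤ ENNReal.ofReal (π - 2*(k₀*r)) := by
    calc volume (A ∩ Ioc t' (t' + 2*π)) ≤ volume (Icc (t' + k₀ * r) (t' + π - k₀ * r)) :=
          measure_mono hcont
      _ = ENNReal.ofReal (π - 2*(k₀*r)) := by rw [Real.volume_Icc]; ring_nf
  have hlt : ENNReal.ofReal (π - 2*(k₀*r)) < ENNReal.ofReal π :=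
    (ENNReal.ofReal_lt_ofReal_iff hπ).2 (by linarith [mul_pos hk₀pos hr0])
  rw [htrans] at hhalf
  exact absurd (lt_of_le_of_lt (le_trans hhalf hfin) hlt) (lt_irrefl _)

theorem lmvp_viscosity_supersolution (Ω : Set ℂ) (hΩ : IsOpen Ω)
    (u : ℂ → ℝ) (hu : ContinuousOn u Ω) (hlmvp : HasLMVP Ω u)
    (x₀ : ℂ) (hx₀ : x₀ ∈ Ω) (φ : ℂ → ℝ) (hφ : ContDiff ℝ 2 φ)
    (htouch : φ x₀ = u x₀) (hbelow : ∀ x ∈ Ω, x ≠ x₀ → φ x < u x)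
    (hD : fderiv ℝ φ x₀ ≠ 0)
    (v : ℂ) (hv : ‖v‖ = 1) (hvo : fderiv ℝ φ x₀ v = 0) :
    0 ≤ -(iteratedFDeriv ℝ 2 φ x₀ ![v, v]) := by
  by_contra hcon
  push_neg at hcon
  rw [iteratedFDeriv_two_apply] at hcon
  simp only [Matrix.cons_val_zero, Matrix.cons_val_one, Matrix.head_cons] at hcon
  have hq : 0 < fderiv ℝ (fderiv ℝ φ) x₀ v v := by linarith
  have hvne : v ≠ 0 := by
    intro h
    rw [h, norm_zero] at hv
    norm_num at hv
  have hcne : fderiv ℝ φ x₀ (Complex.I * v) ≠ 0 := by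
    intro h0
    apply hD
    ext w
    have hdec : ((w / v).re : ℝ) • v + ((w / v).im : ℝ) • (Complex.I * v) = w := by
      rw [Complex.real_smul, Complex.real_smul]
      calc ((w / v).re : ℂ) * v + ((w / v).im : ℂ) * (Complex.I * v)
          = (((w / v).re : ℂ) + ((w / v).im : ℂ) * Complex.I) * v := by ring
        _ = (w / v) * v := by rw [Complex.re_add_im]
        _ = w := div_mul_cancel₀ w hvne
    rw [ContinuousLinearMap.zero_apply, ← hdec, map_add,
      (fderiv ℝ φ x₀).map_smul, (fderiv ℝ φ x₀).map_smul, hvo, h0]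
    simp
  rcases hcne.lt_or_gt with hneg | hpos
  · refine key_aux Ω u hlmvp x₀ hx₀ φ hφ htouch hbelow (-v) (by rw [norm_neg, hv])
      (by rw [map_neg, hvo, neg_zero]) ?_ ?_
    · rw [mul_neg, (fderiv ℝ φ x₀).map_neg]
      linarith
    · have he : (fderiv ℝ (fderiv ℝ φ) x₀ (-v)) (-v) = (fderiv ℝ (fderiv ℝ φ) x₀ v) v := by
        rw [(fderiv ℝ (fderiv ℝ φ) x₀).map_neg, ContinuousLinearMap.neg_apply,
          (fderiv ℝ (fderiv ℝ φ) x₀ v).map_neg, neg_neg]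
      rw [he]
      exact hq
  · exact key_aux Ω u hlmvp x₀ hx₀ φ hφ htouch hbelow v hv hvo hpos hq
end

section
/- Let Ω ⊂ ℝ² be open and let u : Ω → ℝ be continuous with the local median value property. Then u is a viscosity subsolution of −Δ₁u = 0: whenever x₀ ∈ Ω and φ ∈ C²(Ω) satisfy φ(x₀) = u(x₀), φ(x) > u(x) for x ≠ x₀, and Dφ(x₀) ≠ 0, then −Δ₁φ(x₀) ≤ 0. -/
open MeasureTheory Set Metric Real Filter Topology

/-- Key measure estimate: if `g` is continuous, `2π`-periodic and antiperiodic with period `π`,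
then for `t > 0` the set where `t ≤ g` in a period window has measure `< π`. -/
lemma measure_ge_lt_pi {g : ℝ → ℝ} (hg : Continuous g)
    (hper : ∀ θ, g (θ + 2*π) = g θ) (hanti : ∀ θ, g (θ + π) = -g θ)
    {t : ℝ} (ht : 0 < t) :
    volume {θ ∈ Ioc (0:ℝ) (2*π) | t ≤ g θ} < ENNReal.ofReal π := by
  have pi_pos := Real.pi_pos
  set A : Set ℝ := g ⁻¹' (Ici t) with hA
  set Bs : Set ℝ := g ⁻¹' (Iic (-t)) with hBs
  have hAm : MeasurableSet A := (isClosed_Ici.preimage hg).measurableSet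
  have hBm : MeasurableSet Bs := (isClosed_Iic.preimage hg).measurableSet
  have hset : {θ ∈ Ioc (0:ℝ) (2*π) | t ≤ g θ} = A ∩ Ioc 0 (2*π) := by
    ext θ; simp [hA, and_comm]
  have claim1 : volume (A ∩ Ioc (2*π) (3*π)) = volume (A ∩ Ioc 0 π) := by
    have he : A ∩ Ioc (2*π) (3*π) = (fun θ => θ + -(2*π)) ⁻¹' (A ∩ Ioc 0 π) := by
      ext θ
      have hgθ : g (θ + -(2*π)) = g θ := by
        have h := hper (θ + -(2*π))
        rw [show θ + -(2*π) + 2*π = θ by ring] at h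
        exact h.symm
      simp only [mem_inter_iff, mem_preimage, mem_Ioc, hA, mem_Ici, hgθ]
      constructor
      · rintro ⟨h1, h2, h3⟩; exact ⟨h1, by linarith, by linarith⟩
      · rintro ⟨h1, h2, h3⟩; exact ⟨h1, by linarith, by linarith⟩
    rw [he, measure_preimage_add_right]
  have claim2 : volume (Bs ∩ Ioc 0 (2*π)) = volume (A ∩ Ioc π (3*π)) := by
    have he : Bs ∩ Ioc 0 (2*π) = (fun θ => θ + π) ⁻¹' (A ∩ Ioc π (3*π)) := by
      ext θ
      have hgθ : g (θ + π) = -g θ := hanti θ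
      simp only [mem_inter_iff, mem_preimage, mem_Ioc, hA, hBs, mem_Ici, mem_Iic, hgθ]
      constructor
      · rintro ⟨h1, h2, h3⟩; exact ⟨by linarith, by linarith, by linarith⟩
      · rintro ⟨h1, h2, h3⟩; exact ⟨by linarith, by linarith, by linarith⟩
    rw [he, measure_preimage_add_right]
  have hsplit3 : volume (A ∩ Ioc π (3*π)) = volume (A ∩ Ioc 0 (2*π)) := by
    have h1 : A ∩ Ioc π (3*π) = (A ∩ Ioc π (2*π)) ∪ (A ∩ Ioc (2*π) (3*π)) := by
      rw [← inter_union_distrib_left, Ioc_union_Ioc_eq_Ioc (by linarith) (by linarith)]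
    have h2 : A ∩ Ioc 0 (2*π) = (A ∩ Ioc 0 π) ∪ (A ∩ Ioc π (2*π)) := by
      rw [← inter_union_distrib_left, Ioc_union_Ioc_eq_Ioc (by linarith) (by linarith)]
    have hd1 : Disjoint (A ∩ Ioc π (2*π)) (A ∩ Ioc (2*π) (3*π)) := by
      rw [Set.disjoint_left]
      rintro θ ⟨-, hθ1⟩ ⟨-, hθ2⟩
      rw [mem_Ioc] at hθ1 hθ2
      linarith [hθ1.2, hθ2.1]
    have hd2 : Disjoint (A ∩ Ioc 0 π) (A ∩ Ioc π (2*π)) := by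
      rw [Set.disjoint_left]
      rintro θ ⟨-, hθ1⟩ ⟨-, hθ2⟩
      rw [mem_Ioc] at hθ1 hθ2
      linarith [hθ1.2, hθ2.1]
    rw [h1, h2, measure_union hd1 (hAm.inter measurableSet_Ioc),
      measure_union hd2 (hAm.inter measurableSet_Ioc), claim1]
    exact add_comm _ _
  obtain ⟨θs, hθs, hgθs⟩ : ∃ θs ∈ Icc (π/2) (3*π/2), g θs = 0 := by
    have h1 : g (3*π/2) = -g (π/2) := by
      have h := hanti (π/2)
      rwa [show π/2 + π = 3*π/2 by ring] at h
    have hsub : Set.uIcc (g (π/2)) (g (3*π/2)) ⊆ g '' Set.uIcc (π/2) (3*π/2) :=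
      intermediate_value_uIcc hg.continuousOn
    have h0 : (0:ℝ) ∈ Set.uIcc (g (π/2)) (g (3*π/2)) := by
      rw [h1, Set.mem_uIcc]
      rcases le_total (g (π/2)) 0 with h | h
      · exact Or.inl ⟨h, by linarith⟩
      · exact Or.inr ⟨by linarith, h⟩
    obtain ⟨θs, hθs, h⟩ := hsub h0
    rw [Set.uIcc_of_le (by linarith)] at hθs
    exact ⟨θs, hθs, h⟩
  set U : Set ℝ := Ioo 0 (2*π) ∩ g ⁻¹' (Ioo (-t) t) with hU
  have hUopen : IsOpen U := isOpen_Ioo.inter (isOpen_Ioo.preimage hg)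
  have hUne : U.Nonempty := by
    refine ⟨θs, ⟨?_, ?_⟩, ?_⟩
    · linarith [hθs.1]
    · linarith [hθs.2]
    · show g θs ∈ Ioo (-t) t
      rw [hgθs]
      exact ⟨by linarith, ht⟩
  have hUpos : 0 < volume U := hUopen.measure_pos volume hUne
  have hd1 : Disjoint (A ∩ Ioc 0 (2*π)) (Bs ∩ Ioc 0 (2*π)) := by
    rw [Set.disjoint_left]
    rintro θ ⟨h1, -⟩ ⟨h2, -⟩
    rw [hA, mem_preimage, mem_Ici] at h1
    rw [hBs, mem_preimage, mem_Iic] at h2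
    linarith
  have hd2 : Disjoint ((A ∩ Ioc 0 (2*π)) ∪ (Bs ∩ Ioc 0 (2*π))) U := by
    rw [Set.disjoint_left]
    rintro θ (⟨h1, -⟩ | ⟨h1, -⟩) ⟨-, h2⟩ <;>
    · rw [mem_preimage, mem_Ioo] at h2
      first
        | (rw [hA, mem_preimage, mem_Ici] at h1; linarith [h2.2])
        | (rw [hBs, mem_preimage, mem_Iic] at h1; linarith [h2.1])
  have hsum : volume (A ∩ Ioc 0 (2*π)) + volume (Bs ∩ Ioc 0 (2*π)) + volume U
      ≤ ENNReal.ofReal (2*π) := by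
    have hmono : volume (((A ∩ Ioc 0 (2*π)) ∪ (Bs ∩ Ioc 0 (2*π))) ∪ U)
        ≤ volume (Ioc (0:ℝ) (2*π)) := by
      apply measure_mono
      rintro θ ((⟨-, h⟩ | ⟨-, h⟩) | ⟨h, -⟩)
      · exact h
      · exact h
      · exact Ioo_subset_Ioc_self h
    rw [measure_union hd2 hUopen.measurableSet,
      measure_union hd1 (hBm.inter measurableSet_Ioc), Real.volume_Ioc] at hmono
    calc volume (A ∩ Ioc 0 (2*π)) + volume (Bs ∩ Ioc 0 (2*π)) + volume U
        ≤ ENNReal.ofReal (2*π - 0) := hmono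
      _ = ENNReal.ofReal (2*π) := by norm_num
  rw [hset]
  set α := volume (A ∩ Ioc 0 (2*π)) with hα
  have hsum' : α + α + volume U ≤ ENNReal.ofReal (2*π) := by
    rwa [claim2, hsplit3] at hsum
  have hαfin : α + α ≠ ⊤ := by
    refine ne_top_of_le_ne_top ?_ (le_trans le_self_add hsum')
    exact ENNReal.ofReal_ne_top
  by_contra hcon
  push_neg at hcon
  have h2π : ENNReal.ofReal (2*π) = ENNReal.ofReal π + ENNReal.ofReal π := by
    rw [← ENNReal.ofReal_add pi_pos.le pi_pos.le]
    ring_nf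
  have key : α + α + volume U ≤ α + α + 0 := by
    calc α + α + volume U ≤ ENNReal.ofReal (2*π) := hsum'
      _ = ENNReal.ofReal π + ENNReal.ofReal π := h2π
      _ ≤ α + α + 0 := by rw [add_zero]; exact add_le_add hcon hcon
  have hU0 : volume U ≤ 0 := (ENNReal.add_le_add_iff_left hαfin).1 key
  exact absurd (le_antisymm hU0 zero_le) hUpos.ne'


/-- Uniform second-order Taylor estimate for a `C²` function. -/
lemma taylor_bound {φ : ℂ → ℝ} (hφ : ContDiff ℝ 2 φ) (x₀ : ℂ) {η : ℝ} (hη : 0 < η) :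
    ∃ ρ > 0, ∀ y : ℂ, ‖y - x₀‖ ≤ ρ →
      |φ y - φ x₀ - fderiv ℝ φ x₀ (y - x₀)
        - 2⁻¹ * (fderiv ℝ (fderiv ℝ φ) x₀ (y - x₀) (y - x₀))| ≤ η * ‖y - x₀‖ ^ 2 := by
  set G := fderiv ℝ φ with hG
  have hφdiff : Differentiable ℝ φ := hφ.differentiable (by norm_num)
  have hGc : ContDiff ℝ 1 G := hφ.fderiv_right (by norm_num)
  have hGdiff : Differentiable ℝ G := hGc.differentiable one_ne_zero
  have hDGcont : Continuous (fderiv ℝ G) := hGc.continuous_fderiv one_ne_zero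
  set B := fderiv ℝ G x₀ with hB
  have hBsymm : ∀ w z : ℂ, B w z = B z w :=
    second_derivative_symmetric (fun y => (hφdiff y).hasFDerivAt) (hGdiff x₀).hasFDerivAt
  obtain ⟨ρ, hρ, hball⟩ : ∃ ρ > 0, ∀ z : ℂ, ‖z - x₀‖ ≤ ρ → ‖fderiv ℝ G z - B‖ ≤ η := by
    obtain ⟨δ, hδ, h⟩ := (Metric.continuousAt_iff (f := fderiv ℝ G) (a := x₀)).1 hDGcont.continuousAt η hη
    refine ⟨δ/2, by linarith, fun z hz => ?_⟩
    have h2 := h (show dist z x₀ < δ by rw [dist_eq_norm]; linarith)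
    exact (dist_eq_norm (fderiv ℝ G z) B ▸ h2).le
  -- linear-term auxiliary derivative facts
  have hsub : ∀ z : ℂ, HasFDerivAt (fun w : ℂ => w - x₀) (ContinuousLinearMap.id ℝ ℂ) z :=
    fun z => (hasFDerivAt_id z).sub_const x₀
  have hBaff : ∀ z : ℂ, HasFDerivAt (fun w : ℂ => B (w - x₀)) B z := by
    intro z
    have h := B.hasFDerivAt.comp z (hsub z)
    rw [ContinuousLinearMap.comp_id] at h
    exact h
  have stepA : ∀ z : ℂ, ‖z - x₀‖ ≤ ρ → ‖G z - G x₀ - B (z - x₀)‖ ≤ η * ‖z - x₀‖ := by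
    intro z hz
    have hmvt := Convex.norm_image_sub_le_of_norm_hasFDerivWithin_le
      (f := fun w => G w - B (w - x₀)) (f' := fun w => fderiv ℝ G w - B)
      (C := η) (s := closedBall x₀ ρ)
      (fun w _ => (((hGdiff w).hasFDerivAt).sub (hBaff w)).hasFDerivWithinAt)
      (fun w hw => hball w (by rwa [mem_closedBall, dist_eq_norm] at hw))
      (convex_closedBall x₀ ρ) (mem_closedBall_self hρ.le)
      (by rwa [mem_closedBall, dist_eq_norm])
    have he : G z - B (z - x₀) - (G x₀ - B (x₀ - x₀)) = G z - G x₀ - B (z - x₀) := by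
      simp only [sub_self, map_zero]
      abel
    rwa [he] at hmvt
  refine ⟨ρ, hρ, fun y hy => ?_⟩
  set h : ℂ → ℝ := fun w => φ w - G x₀ (w - x₀) - 2⁻¹ * (B (w - x₀) (w - x₀)) with hh
  have hderiv : ∀ z : ℂ, HasFDerivAt h (G z - G x₀ - B (z - x₀)) z := by
    intro z
    have h1 : HasFDerivAt φ (G z) z := (hφdiff z).hasFDerivAt
    have h2 : HasFDerivAt (fun w : ℂ => G x₀ (w - x₀)) (G x₀) z := by
      have h := (G x₀).hasFDerivAt.comp z (hsub z)
      rw [ContinuousLinearMap.comp_id] at h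
      exact h
    have h3 : HasFDerivAt (fun w : ℂ => B (w - x₀) (w - x₀))
        ((B (z - x₀)).comp (ContinuousLinearMap.id ℝ ℂ) + B.flip (z - x₀)) z :=
      (hBaff z).clm_apply (hsub z)
    have h4 := (h1.sub h2).sub (h3.const_mul (2⁻¹ : ℝ))
    have heq : G z - G x₀ - (2⁻¹ : ℝ) •
        ((B (z - x₀)).comp (ContinuousLinearMap.id ℝ ℂ) + B.flip (z - x₀))
        = G z - G x₀ - B (z - x₀) := by
      ext w
      simp only [ContinuousLinearMap.coe_sub', Pi.sub_apply, ContinuousLinearMap.coe_smul',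
        Pi.smul_apply, ContinuousLinearMap.add_apply, ContinuousLinearMap.coe_comp',
        Function.comp_apply, ContinuousLinearMap.coe_id', id_eq,
        ContinuousLinearMap.flip_apply, smul_eq_mul]
      rw [hBsymm w (z - x₀)]
      ring
    rw [← heq]
    exact h4
  have hmvt2 := Convex.norm_image_sub_le_of_norm_hasFDerivWithin_le
    (f := h) (f' := fun z => G z - G x₀ - B (z - x₀))
    (C := η * ‖y - x₀‖) (s := closedBall x₀ ‖y - x₀‖)
    (fun z _ => (hderiv z).hasFDerivWithinAt)
    (fun z hz => by
      rw [mem_closedBall, dist_eq_norm] at hz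
      calc ‖G z - G x₀ - B (z - x₀)‖ ≤ η * ‖z - x₀‖ := stepA z (hz.trans hy)
        _ ≤ η * ‖y - x₀‖ := by
            exact mul_le_mul_of_nonneg_left hz hη.le)
    (convex_closedBall _ _) (mem_closedBall_self (norm_nonneg _))
    (by rw [mem_closedBall, dist_eq_norm])
  have hx0 : h x₀ = φ x₀ := by simp [hh]
  rw [hx0] at hmvt2
  have : |h y - φ x₀| ≤ η * ‖y - x₀‖ ^ 2 := by
    rw [← Real.norm_eq_abs]
    calc ‖h y - φ x₀‖ ≤ η * ‖y - x₀‖ * ‖y - x₀‖ := hmvt2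
      _ = η * ‖y - x₀‖ ^ 2 := by ring
  have he2 : h y - φ x₀ = φ y - φ x₀ - G x₀ (y - x₀) - 2⁻¹ * (B (y - x₀) (y - x₀)) := by
    rw [hh]; ring
  rwa [he2] at this

set_option maxHeartbeats 1000000 in
theorem lmvp_viscosity_subsolution (Ω : Set ℂ) (hΩ : IsOpen Ω)
    (u : ℂ → ℝ) (hu : ContinuousOn u Ω) (hlmvp : HasLMVP Ω u)
    (x₀ : ℂ) (hx₀ : x₀ ∈ Ω) (φ : ℂ → ℝ) (hφ : ContDiff ℝ 2 φ)
    (htouch : φ x₀ = u x₀) (habove : ∀ x ∈ Ω, x ≠ x₀ → u x < φ x)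
    (hD : fderiv ℝ φ x₀ ≠ 0)
    (v : ℂ) (hv : ‖v‖ = 1) (hvo : fderiv ℝ φ x₀ v = 0) :
    -(iteratedFDeriv ℝ 2 φ x₀ ![v, v]) ≤ 0 := by
  by_contra hcon
  push_neg at hcon
  obtain ⟨R, hRcont, hRpos, hmed⟩ := hlmvp
  obtain ⟨Rx₀pos, RleInf⟩ := hRpos x₀ hx₀
  set p := fderiv ℝ φ x₀ with hp
  set B := fderiv ℝ (fderiv ℝ φ) x₀ with hB
  have hφdiff : Differentiable ℝ φ := hφ.differentiable (by norm_num)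
  have hGc : ContDiff ℝ 1 (fderiv ℝ φ) := hφ.fderiv_right (by norm_num)
  have hGdiff : Differentiable ℝ (fderiv ℝ φ) := hGc.differentiable one_ne_zero
  have hBsymm : ∀ w z : ℂ, B w z = B z w :=
    second_derivative_symmetric (fun y => (hφdiff y).hasFDerivAt) (hGdiff x₀).hasFDerivAt
  have hQvv : iteratedFDeriv ℝ 2 φ x₀ ![v, v] = B v v := by
    rw [iteratedFDeriv_two_apply]
    simp only [Matrix.cons_val_zero, Matrix.cons_val_one, Matrix.head_cons]
    rfl
  set c : ℝ := -(B v v) with hc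
  have hcpos : 0 < c := by rw [hQvv] at hcon; rw [hc]; linarith
  -- kernel of p on the unit circle is {v, -v}
  have hv0 : v ≠ 0 := by intro h; rw [h] at hv; simp at hv
  have hbasis : ∀ z : ℂ, z = (z/v).re • v + (z/v).im • (Complex.I * v) := by
    intro z
    rw [Complex.real_smul, Complex.real_smul,
      show ((z/v).re : ℂ) * v + ((z/v).im : ℂ) * (Complex.I * v)
        = (((z/v).re : ℂ) + ((z/v).im : ℂ) * Complex.I) * v by ring,
      Complex.re_add_im]
    exact (div_mul_cancel₀ z hv0).symm
  have hpI : p (Complex.I * v) ≠ 0 := by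
    intro h0
    apply hD
    apply ContinuousLinearMap.ext
    intro z
    have hz := hbasis z
    calc p z = p ((z/v).re • v + (z/v).im • (Complex.I * v)) := by rw [← hz]
      _ = (z/v).re * p v + (z/v).im * p (Complex.I * v) := by
          rw [_root_.map_add, _root_.map_smul, _root_.map_smul]; simp [smul_eq_mul]
      _ = 0 := by rw [hvo, h0]; ring
      _ = (0 : ℂ →L[ℝ] ℝ) z := by simp
  have hker : ∀ w : ℂ, ‖w‖ = 1 → p w = 0 → w = v ∨ w = -v := by
    intro w hw hpw
    have hexp : p w = (w/v).re * p v + (w/v).im * p (Complex.I * v) := by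
      conv_lhs => rw [hbasis w]
      rw [_root_.map_add, _root_.map_smul, _root_.map_smul]; simp [smul_eq_mul]
    rw [hpw, hvo, mul_zero, zero_add] at hexp
    have him : (w/v).im = 0 := (mul_eq_zero.1 hexp.symm).resolve_right hpI
    have hw' : w = (w/v).re • v := by
      have h := hbasis w
      rwa [him, zero_smul, add_zero] at h
    have habs : |(w/v).re| = 1 := by
      rw [hw', norm_smul, Real.norm_eq_abs, hv, mul_one] at hw
      exact hw
    rcases (abs_eq (by norm_num : (0:ℝ) ≤ 1)).1 habs with h1 | h1
    · left; rw [hw', h1, one_smul]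
    · right; rw [hw', h1]; simp
  -- compactness step
  have hQcont : Continuous (fun w : ℂ => B w w) :=
    isBoundedBilinearMap_apply.continuous.comp (B.continuous.prodMk continuous_id)
  obtain ⟨s, hs, hstep1⟩ : ∃ s > 0, ∀ w : ℂ, ‖w‖ = 1 → |p w| ≤ s → B w w ≤ -c/2 := by
    set Kt : Set ℂ := {w : ℂ | ‖w‖ = 1 ∧ -c/2 ≤ B w w} with hKt
    have hKtclosed : IsClosed Kt := by
      rw [hKt, Set.setOf_and]
      exact (isClosed_eq continuous_norm continuous_const).inter
        (isClosed_le continuous_const hQcont)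
    have hKtsub : Kt ⊆ Metric.sphere 0 1 := fun w hw => by
      rw [mem_sphere_zero_iff_norm]; exact hw.1
    have hKtcpt : IsCompact Kt := (isCompact_sphere 0 1).of_isClosed_subset hKtclosed hKtsub
    rcases Kt.eq_empty_or_nonempty with hKe | hKne
    · refine ⟨1, one_pos, fun w hw _ => ?_⟩
      by_contra hlt
      push_neg at hlt
      exact absurd (show w ∈ Kt from ⟨hw, hlt.le⟩) (by rw [hKe]; simp)
    · obtain ⟨w₀, hw₀K, hmin⟩ := hKtcpt.exists_isMinOn hKne
        ((continuous_abs.comp p.continuous).continuousOn)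
      have hw₀pos : 0 < |p w₀| := by
        rcases eq_or_ne (p w₀) 0 with h | h
        · exfalso
          have hBvv : B v v = -c := by rw [hc]; ring
          rcases hker w₀ hw₀K.1 h with rfl | rfl
          · have h2 := hw₀K.2
            rw [hBvv] at h2
            linarith
          · have h2 := hw₀K.2
            have h3 : B (-v) (-v) = B v v := by simp
            rw [h3, hBvv] at h2
            linarith
        · exact abs_pos.2 h
      refine ⟨|p w₀|/2, by linarith, fun w hw hle => ?_⟩
      by_contra hlt
      push_neg at hlt
      have hwK : w ∈ Kt := ⟨hw, hlt.le⟩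
      have hmin' : |p w₀| ≤ |p w| := isMinOn_iff.1 hmin w hwK
      linarith
  -- Taylor expansion with error c/8
  have hη : (0:ℝ) < c/8 := by linarith
  obtain ⟨ρ, hρ, htay⟩ := taylor_bound hφ x₀ hη
  set M : ℝ := ‖B‖ with hM
  have hMnn : 0 ≤ M := by rw [hM]; exact norm_nonneg B
  set D : ℝ := M/2 + c/8 + 1 with hD2
  have hDpos : 0 < D := by rw [hD2]; linarith
  set K : ℝ := c/16 with hK
  have hKpos : 0 < K := by rw [hK]; linarith
  set r : ℝ := min (min ρ (R x₀ / 2)) (min (s/K) (s/D)) with hr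
  have hrpos : 0 < r :=
    lt_min (lt_min hρ (by linarith)) (lt_min (div_pos hs hKpos) (div_pos hs hDpos))
  have hrρ : r ≤ ρ := le_trans (min_le_left _ _) (min_le_left _ _)
  have hrR2 : r ≤ R x₀ / 2 := le_trans (min_le_left _ _) (min_le_right _ _)
  have hrsK : r ≤ s/K := le_trans (min_le_right _ _) (min_le_left _ _)
  have hrsD : r ≤ s/D := le_trans (min_le_right _ _) (min_le_right _ _)
  have hrR : r ≤ R x₀ := by linarith
  -- the circle direction and the linear term
  set e : ℝ → ℂ := fun θ => Complex.exp (θ * Complex.I) with he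
  have henorm : ∀ θ : ℝ, ‖e θ‖ = 1 := fun θ => Complex.norm_exp_ofReal_mul_I θ
  set g : ℝ → ℝ := fun θ => p (e θ) with hg
  have hgc : Continuous g :=
    p.continuous.comp (Complex.continuous_exp.comp
      (Complex.continuous_ofReal.mul continuous_const))
  have hgper : ∀ θ, g (θ + 2*π) = g θ := by
    intro θ
    have hE : e (θ + 2*π) = e θ := by
      rw [he]
      simp only
      push_cast
      rw [add_mul, Complex.exp_add, Complex.exp_two_pi_mul_I, mul_one]
    rw [hg]
    simp only
    rw [hE]
  have hganti : ∀ θ, g (θ + π) = -g θ := by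
    intro θ
    have hE : e (θ + π) = -e θ := by
      rw [he]
      simp only
      push_cast
      rw [add_mul, Complex.exp_add, Complex.exp_pi_mul_I]
      ring
    rw [hg]
    simp only
    rw [hE, _root_.map_neg]
  have hcirc : ∀ θ : ℝ, circleMap x₀ r θ - x₀ = r • e θ := by
    intro θ
    rw [circleMap, he]
    simp only
    rw [Complex.real_smul]
    ring
  have hnormc : ∀ θ : ℝ, ‖circleMap x₀ r θ - x₀‖ = r := by
    intro θ
    rw [hcirc θ, norm_smul, Real.norm_eq_abs, abs_of_pos hrpos, henorm, mul_one]
  clear_value c M D K r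
  -- exclusion step
  have hexc : ∀ θ : ℝ, g θ < K * r → φ (circleMap x₀ r θ) < φ x₀ := by
    intro θ hgθ
    have htb := htay (circleMap x₀ r θ) (by rw [hnormc θ]; exact hrρ)
    rw [hcirc θ] at htb
    have hpr : fderiv ℝ φ x₀ ((r:ℝ) • e θ) = r * g θ := by
      rw [← hp, _root_.map_smul]
      simp [hg, smul_eq_mul]
    have hBr : fderiv ℝ (fderiv ℝ φ) x₀ ((r:ℝ) • e θ) ((r:ℝ) • e θ)
        = r * (r * B (e θ) (e θ)) := by
      rw [← hB]
      simp only [_root_.map_smul, ContinuousLinearMap.smul_apply, smul_eq_mul]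
    have hn2 : ‖(r:ℝ) • e θ‖ ^ 2 = r^2 := by
      rw [norm_smul, Real.norm_eq_abs, abs_of_pos hrpos, henorm, mul_one]
    rw [hpr, hBr, hn2] at htb
    have hub : φ (circleMap x₀ r θ) - φ x₀
        ≤ r * g θ + 2⁻¹ * (r * (r * B (e θ) (e θ))) + c/8 * r^2 := by
      have h := (abs_le.1 htb).2
      linarith
    rcases le_or_gt (|g θ|) s with hcase | hcase
    · have hQle : B (e θ) (e θ) ≤ -c/2 := hstep1 (e θ) (henorm θ) hcase
      have h1 : r * g θ < r * (K * r) := mul_lt_mul_of_pos_left hgθ hrpos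
      have h2a : r * B (e θ) (e θ) ≤ r * (-c/2) := mul_le_mul_of_nonneg_left hQle hrpos.le
      have h2b : r * (r * B (e θ) (e θ)) ≤ r * (r * (-c/2)) :=
        mul_le_mul_of_nonneg_left h2a hrpos.le
      have h2 : 2⁻¹ * (r * (r * B (e θ) (e θ))) ≤ 2⁻¹ * (r * (r * (-c/2))) :=
        mul_le_mul_of_nonneg_left h2b (by norm_num)
      have h3 : φ (circleMap x₀ r θ) - φ x₀
          < r * (K * r) + 2⁻¹ * (r * (r * (-c/2))) + c/8 * r^2 := by linarith
      have h4 : r * (K * r) + 2⁻¹ * (r * (r * (-c/2))) + c/8 * r^2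
          = -(c/16) * r^2 := by rw [hK]; ring
      have h5 : 0 < c/16 * r^2 := by positivity
      linarith
    · have hKr : K * r ≤ s := by
        have h := (le_div_iff₀ hKpos).1 hrsK
        linarith [h]
      have hgneg : g θ ≤ -s := by
        rcases lt_abs.1 hcase with h | h
        · linarith
        · linarith
      have hQle : B (e θ) (e θ) ≤ M := by
        calc B (e θ) (e θ) ≤ |B (e θ) (e θ)| := le_abs_self _
          _ = ‖B (e θ) (e θ)‖ := (Real.norm_eq_abs _).symm
          _ ≤ ‖B‖ * ‖e θ‖ * ‖e θ‖ := B.le_opNorm₂ (e θ) (e θ)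
          _ = M := by rw [henorm, hM]; ring
      have hrD : r * (M/2 + c/8) < s := by
        have h : r * D ≤ s := (le_div_iff₀ hDpos).1 hrsD
        have h2 : r * D = r * (M/2 + c/8) + r := by rw [hD2]; ring
        linarith
      have h1 : r * g θ ≤ r * (-s) := mul_le_mul_of_nonneg_left hgneg hrpos.le
      have h2a : r * B (e θ) (e θ) ≤ r * M := mul_le_mul_of_nonneg_left hQle hrpos.le
      have h2b : r * (r * B (e θ) (e θ)) ≤ r * (r * M) :=
        mul_le_mul_of_nonneg_left h2a hrpos.le
      have h2 : 2⁻¹ * (r * (r * B (e θ) (e θ))) ≤ 2⁻¹ * (r * (r * M)) :=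
        mul_le_mul_of_nonneg_left h2b (by norm_num)
      have h3 : φ (circleMap x₀ r θ) - φ x₀
          ≤ r * (-s) + 2⁻¹ * (r * (r * M)) + c/8 * r^2 := by linarith
      have h4 : r * (-s) + 2⁻¹ * (r * (r * M)) + c/8 * r^2
          = r * (-s + r * (M/2 + c/8)) := by ring
      have h5 : -s + r * (M/2 + c/8) < 0 := by linarith
      have h6 : r * (-s + r * (M/2 + c/8)) < 0 := mul_neg_of_pos_of_neg hrpos h5
      linarith
  -- the circle lies inside Ω
  have hmem : ∀ θ : ℝ, circleMap x₀ r θ ∈ Ω := by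
    intro θ
    by_contra hnot
    have h1 : infDist x₀ Ωᶜ ≤ dist x₀ (circleMap x₀ r θ) := infDist_le_dist_of_mem hnot
    have h2 : dist x₀ (circleMap x₀ r θ) = r := by
      rw [dist_eq_norm, norm_sub_rev, hnormc θ]
    rw [h2] at h1
    linarith
  -- median property and conclusion
  have hmedr := (hmed x₀ hx₀ r hrpos hrR).1
  have hhalf : volume (Ioc (0:ℝ) (2*π)) / 2 = ENNReal.ofReal π := by
    rw [Real.volume_Ioc, show (2*π - 0 : ℝ) = 2*π by ring,
      show (2:ENNReal) = ENNReal.ofReal (2:ℝ) by norm_num,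
      ← ENNReal.ofReal_div_of_pos (by norm_num : (0:ℝ) < 2),
      show (2*π/2 : ℝ) = π by ring]
  have hsubset : {θ ∈ Ioc (0:ℝ) (2*π) | u x₀ ≤ u (circleMap x₀ r θ)}
      ⊆ {θ ∈ Ioc (0:ℝ) (2*π) | K * r ≤ g θ} := by
    rintro θ ⟨hθI, hθu⟩
    refine ⟨hθI, ?_⟩
    by_contra hlt
    push_neg at hlt
    have hφlt := hexc θ hlt
    have hyΩ := hmem θ
    have hyne : circleMap x₀ r θ ≠ x₀ := by
      intro heq
      have h := hnormc θ
      rw [heq] at h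
      simp at h
      linarith
    have hlt2 := habove _ hyΩ hyne
    linarith
  have hlow : ENNReal.ofReal π ≤ volume {θ ∈ Ioc (0:ℝ) (2*π) | K * r ≤ g θ} := by
    refine le_trans ?_ (measure_mono hsubset)
    rw [← hhalf]
    exact hmedr
  have hupper := measure_ge_lt_pi hgc hgper hganti (mul_pos hKpos hrpos)
  exact absurd (lt_of_le_of_lt hlow hupper) (lt_irrefl _)
end

section
/- Let u be a smooth (C¹) function on an open set Ω ⊂ ℝ² satisfying the local median value property, and suppose Du(x₀) ≠ 0 at some x₀ ∈ Ω. Then there exists r > 0 such that the connected component of the level set {x ∈ B(x₀,r) : u(x) = u(x₀)} containing x₀ is a diameter of B(x₀,r), i.e., a straight line segment through x₀. -/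
open MeasureTheory Set Metric Real Filter Topology

open MeasureTheory Set Metric Real Filter Topology

lemma vol_Ioc_div_two : volume (Ioc (0:ℝ) (2*π)) / 2 = ENNReal.ofReal π := by
  rw [Real.volume_Ioc, sub_zero, show (2:ℝ)*π = π*2 by ring,
    ENNReal.ofReal_mul Real.pi_pos.le]
  rw [ENNReal.ofReal_ofNat, mul_div_assoc, ENNReal.div_self (by norm_num) (by norm_num), mul_one]

lemma periodic_shift_volume {E : Set ℝ} (hE : MeasurableSet E)
    (hper : ∀ x : ℝ, x + 2*π ∈ E ↔ x ∈ E) (a t : ℝ) :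
    volume (E ∩ Ioc 0 (2*π)) = volume ({ψ ∈ Ioc t (t + 2*π) | a + ψ ∈ E}) := by
  have h2π : (0:ℝ) < 2*π := by positivity
  have hinv : ∀ g : AddSubgroup.zmultiples (2*π), (fun x : ℝ => (g : ℝ) +ᵥ x) ⁻¹' E = E := by
    rintro ⟨g, hg⟩
    obtain ⟨k, rfl⟩ := hg
    have hperi : Function.Periodic (fun x => x ∈ E) (2*π) := fun x => propext (hper x)
    ext x
    simp only [mem_preimage, vadd_eq_add]
    have h := (hperi.zsmul k) x
    simp only [eq_iff_iff] at h
    constructor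
    · intro hx
      exact h.mp (by simpa [add_comm] using hx)
    · intro hx
      have : x + k • (2*π) ∈ E := h.mpr hx
      simpa [add_comm] using this
  have key : volume (E ∩ Ioc 0 (2*π)) = volume (E ∩ Ioc (a + t) ((a + t) + 2*π)) := by
    have h1 := isAddFundamentalDomain_Ioc h2π 0 (volume : Measure ℝ)
    have h2 := isAddFundamentalDomain_Ioc h2π (a + t) (volume : Measure ℝ)
    rw [zero_add] at h1
    exact h1.measure_set_eq h2 hE hinv
  rw [key]
  have hpre : (fun x : ℝ => a + x) ⁻¹' (E ∩ Ioc (a + t) ((a + t) + 2*π))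
      = {ψ ∈ Ioc t (t + 2*π) | a + ψ ∈ E} := by
    ext x
    simp only [mem_preimage, mem_inter_iff, mem_Ioc, mem_setOf_eq]
    constructor
    · rintro ⟨hx, h1, h2⟩
      exact ⟨⟨by linarith, by linarith⟩, hx⟩
    · rintro ⟨⟨h1, h2⟩, hx⟩
      exact ⟨hx, by linarith, by linarith⟩
  rw [← hpre, measure_preimage_add]

lemma midpoint_nonpos {g : ℝ → ℝ} {a : ℝ} (ha : 0 < a)
    (hcont : ContinuousOn g (Icc (-a) a))
    (hmid : ∀ x ∈ Icc (-a) a, ∀ y ∈ Icc (-a) a, g ((x+y)/2) = (g x + g y)/2)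
    (hga : g a = 0) (hgna : g (-a) = 0) :
    ∀ x ∈ Icc (-a) a, g x ≤ 0 := by
  by_contra hcon
  push_neg at hcon
  obtain ⟨z, hz, hgz⟩ := hcon
  have hK : IsCompact (Icc (-a) a) := isCompact_Icc
  obtain ⟨x₀, hx₀K, hmax⟩ := hK.exists_isMaxOn ⟨z, hz⟩ hcont
  set M := g x₀ with hM
  have hMpos : 0 < M := lt_of_lt_of_le hgz (hmax hz)
  set S := {x ∈ Icc (-a) a | g x = M} with hS
  have hScl : IsClosed S := by
    have : S = Icc (-a) a ∩ g ⁻¹' {M} := by ext x; simp only [hS, mem_setOf_eq, mem_inter_iff, mem_preimage, mem_singleton_iff]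
    rw [this]
    exact hcont.preimage_isClosed_of_isClosed isClosed_Icc isClosed_singleton
  have hSsub : S ⊆ Icc (-a) a := fun x hx => hx.1
  have hScp : IsCompact S := hK.of_isClosed_subset hScl hSsub
  have hSne : S.Nonempty := ⟨x₀, hx₀K, rfl⟩
  set x₁ := sSup S with hx₁
  have hx₁S : x₁ ∈ S := hScp.sSup_mem hSne
  have hx₁K : x₁ ∈ Icc (-a) a := hx₁S.1
  have hgx₁ : g x₁ = M := hx₁S.2
  have hne1 : x₁ ≠ a := fun h => by rw [h, hga] at hgx₁; linarith
  have hne2 : x₁ ≠ -a := fun h => by rw [h, hgna] at hgx₁; linarith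
  have hlt : x₁ < a := lt_of_le_of_ne hx₁K.2 hne1
  have hgt : -a < x₁ := lt_of_le_of_ne hx₁K.1 (Ne.symm hne2)
  set d := min (a - x₁) (x₁ + a) with hd
  have hdpos : 0 < d := lt_min (by linarith) (by linarith)
  have hx₂K : x₁ + d ∈ Icc (-a) a := ⟨by nlinarith [min_le_right (a - x₁) (x₁ + a)],
    by nlinarith [min_le_left (a - x₁) (x₁ + a)]⟩
  have hx₃K : x₁ - d ∈ Icc (-a) a := ⟨by nlinarith [min_le_right (a - x₁) (x₁ + a)],
    by nlinarith [min_le_left (a - x₁) (x₁ + a)]⟩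
  have hmid' := hmid (x₁ + d) hx₂K (x₁ - d) hx₃K
  have : ((x₁ + d) + (x₁ - d))/2 = x₁ := by ring
  rw [this, hgx₁] at hmid'
  have h2 : g (x₁ + d) ≤ M := hmax hx₂K
  have h3 : g (x₁ - d) ≤ M := hmax hx₃K
  have hgx₂ : g (x₁ + d) = M := by linarith
  have : x₁ + d ≤ x₁ := le_csSup hScp.bddAbove ⟨hx₂K, hgx₂⟩
  linarith

lemma midpoint_linear {h : ℝ → ℝ} {a : ℝ} (ha : 0 < a)
    (hcont : ContinuousOn h (Icc (-a) a))
    (hmid : ∀ x ∈ Icc (-a) a, ∀ y ∈ Icc (-a) a, h ((x+y)/2) = (h x + h y)/2)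
    (h0 : h 0 = 0) :
    ∀ x ∈ Icc (-a) a, h x = (h a / a) * x := by
  have haK : a ∈ Icc (-a) a := ⟨by linarith, le_refl a⟩
  have hnaK : -a ∈ Icc (-a) a := ⟨le_refl (-a), by linarith⟩
  have hsym : h (-a) = - h a := by
    have := hmid a haK (-a) hnaK
    have he : (a + -a)/2 = (0:ℝ) := by ring
    rw [he, h0] at this
    linarith
  set k := h a / a with hk
  set g := fun x => h x - k * x with hg
  have hgmid : ∀ x ∈ Icc (-a) a, ∀ y ∈ Icc (-a) a, g ((x+y)/2) = (g x + g y)/2 := by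
    intro x hx y hy
    simp only [hg]
    rw [hmid x hx y hy]; ring
  have hgcont : ContinuousOn g (Icc (-a) a) :=
    hcont.sub ((continuous_const.mul continuous_id).continuousOn)
  have hga : g a = 0 := by simp [hg, hk]; field_simp; ring
  have hgna : g (-a) = 0 := by simp [hg, hk, hsym]; field_simp; ring
  have hle := midpoint_nonpos ha hgcont hgmid hga hgna
  have hge := midpoint_nonpos (g := fun x => - g x) ha hgcont.neg
    (by intro x hx y hy; beta_reduce; rw [hgmid x hx y hy]; ring)
    (by simp [hga]) (by simp [hgna])
  intro x hx
  have h1 := hle x hx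
  have h2 := hge x hx
  simp only [neg_nonpos] at h2
  have : g x = 0 := le_antisymm h1 (by simpa using h2)
  simp only [hg] at this
  linarith

lemma cos_ge_of_abs_le {x y : ℝ} (h : |x| ≤ y) (hy : y ≤ π) : Real.cos y ≤ Real.cos x := by
  rw [← Real.cos_abs x]
  exact Real.cos_le_cos_of_nonneg_of_le_pi (abs_nonneg x) hy h

lemma cos_ge_half {ψ : ℝ} (h : |ψ| ≤ π/3) : 1/2 ≤ Real.cos ψ := by
  have := cos_ge_of_abs_le h (by linarith [Real.pi_pos])
  rwa [Real.cos_pi_div_three] at this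

lemma cos_le_neg_half {ψ : ℝ} (h1 : 2*π/3 ≤ ψ) (h2 : ψ ≤ 4*π/3) : Real.cos ψ ≤ -(1/2) := by
  have habs : |ψ - π| ≤ π/3 := abs_le.mpr ⟨by linarith, by linarith⟩
  have := cos_ge_half habs
  rw [Real.cos_sub_pi] at this
  linarith

lemma abs_sin_le_sin {x y : ℝ} (h : |x| ≤ y) (hy : y ≤ π/2) : |Real.sin x| ≤ Real.sin y := by
  have h1 : -(π/2) ≤ -y := by linarith
  have hxm : x ∈ Icc (-(π/2)) (π/2) := ⟨by cases abs_le.mp h; linarith, by cases abs_le.mp h; linarith⟩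
  have hym : y ∈ Icc (-(π/2)) (π/2) := ⟨by linarith [abs_nonneg x], hy⟩
  have hnym : -y ∈ Icc (-(π/2)) (π/2) := ⟨h1, by linarith [abs_nonneg x]⟩
  rw [abs_le]
  constructor
  · have := Real.strictMonoOn_sin.monotoneOn hnym hxm (by cases abs_le.mp h; linarith)
    rwa [Real.sin_neg] at this
  · exact Real.strictMonoOn_sin.monotoneOn hxm hym (by cases abs_le.mp h; linarith)

lemma sin_ge_sqrt3 {ψ : ℝ} (h1 : π/3 ≤ ψ) (h2 : ψ ≤ 2*π/3) : Real.sqrt 3 / 2 ≤ Real.sin ψ := by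
  have habs : |ψ - π/2| ≤ π/6 := abs_le.mpr ⟨by linarith, by linarith⟩
  have := cos_ge_of_abs_le habs (by linarith [Real.pi_pos])
  rw [Real.cos_pi_div_six, Real.cos_sub_pi_div_two] at this
  exact this

lemma abs_cos_le_half {ψ : ℝ} (h1 : π/3 ≤ ψ) (h2 : ψ ≤ 2*π/3) : |Real.cos ψ| ≤ 1/2 := by
  have habs : |ψ - π/2| ≤ π/6 := abs_le.mpr ⟨by linarith, by linarith⟩
  have := abs_sin_le_sin habs (by linarith [Real.pi_pos])
  rw [Real.sin_pi_div_six] at this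
  calc |Real.cos ψ| = |Real.sin (ψ - π/2)| := by
        rw [Real.sin_sub_pi_div_two, abs_neg]
      _ ≤ 1/2 := this

lemma sin_le_neg_sqrt3 {ψ : ℝ} (h1 : 4*π/3 ≤ ψ) (h2 : ψ ≤ 5*π/3) :
    Real.sin ψ ≤ -(Real.sqrt 3 / 2) := by
  have := sin_ge_sqrt3 (ψ := ψ - π) (by linarith) (by linarith)
  rw [Real.sin_sub_pi] at this
  linarith

lemma abs_cos_le_half' {ψ : ℝ} (h1 : 4*π/3 ≤ ψ) (h2 : ψ ≤ 5*π/3) : |Real.cos ψ| ≤ 1/2 := by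
  have := abs_cos_le_half (ψ := ψ - π) (by linarith) (by linarith)
  rw [Real.cos_sub_pi, abs_neg] at this
  exact this

lemma cos_decay {lo hi c : ℝ} (hsin : ∀ ψ ∈ Icc lo hi, c ≤ Real.sin ψ) :
    ∀ ψ₁ ∈ Icc lo hi, ∀ ψ₂ ∈ Icc lo hi, ψ₁ ≤ ψ₂ →
      Real.cos ψ₂ + c * (ψ₂ - ψ₁) ≤ Real.cos ψ₁ := by
  intro ψ₁ h₁ ψ₂ h₂ h12
  set f := fun ψ : ℝ => Real.cos ψ + c * ψ with hf
  have hder : ∀ x : ℝ, HasDerivAt f (-Real.sin x + c) x := by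
    intro x
    have := (Real.hasDerivAt_cos x).add ((hasDerivAt_id x).const_mul c)
    exact this.congr_deriv (by ring)
  have hanti : AntitoneOn f (Icc lo hi) := by
    apply antitoneOn_of_deriv_nonpos (convex_Icc lo hi)
    · exact fun x _ => (hder x).continuousAt.continuousWithinAt
    · exact fun x _ => (hder x).differentiableAt.differentiableWithinAt
    · intro x hx
      rw [(hder x).deriv]
      rw [interior_Icc] at hx
      have := hsin x ⟨hx.1.le, hx.2.le⟩
      linarith
  have := hanti h₁ h₂ h12
  simp only [hf] at this
  linarith

lemma cos_grow {lo hi c : ℝ} (hsin : ∀ ψ ∈ Icc lo hi, Real.sin ψ ≤ -c) :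
    ∀ ψ₁ ∈ Icc lo hi, ∀ ψ₂ ∈ Icc lo hi, ψ₁ ≤ ψ₂ →
      Real.cos ψ₁ + c * (ψ₂ - ψ₁) ≤ Real.cos ψ₂ := by
  intro ψ₁ h₁ ψ₂ h₂ h12
  set f := fun ψ : ℝ => Real.cos ψ - c * ψ with hf
  have hder : ∀ x : ℝ, HasDerivAt f (-Real.sin x - c) x := by
    intro x
    have := (Real.hasDerivAt_cos x).sub ((hasDerivAt_id x).const_mul c)
    exact this.congr_deriv (by ring)
  have hmono : MonotoneOn f (Icc lo hi) := by
    apply monotoneOn_of_deriv_nonneg (convex_Icc lo hi)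
    · exact fun x _ => (hder x).continuousAt.continuousWithinAt
    · exact fun x _ => (hder x).differentiableAt.differentiableWithinAt
    · intro x hx
      rw [(hder x).deriv]
      rw [interior_Icc] at hx
      have := hsin x ⟨hx.1.le, hx.2.le⟩
      linarith
  have := hmono h₁ h₂ h12
  simp only [hf] at this
  linarith

lemma sin_lip {lo hi : ℝ} (hcos : ∀ ψ ∈ Icc lo hi, |Real.cos ψ| ≤ 1/2) :
    ∀ ψ₁ ∈ Icc lo hi, ∀ ψ₂ ∈ Icc lo hi, ψ₁ ≤ ψ₂ →
      |Real.sin ψ₂ - Real.sin ψ₁| ≤ (1/2) * (ψ₂ - ψ₁) := by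
  intro ψ₁ h₁ ψ₂ h₂ h12
  have key : ∀ σ : ℝ, σ = 1 ∨ σ = -1 →
      σ * Real.sin ψ₂ - σ * Real.sin ψ₁ ≤ (1/2) * (ψ₂ - ψ₁) := by
    intro σ hσ
    set f := fun ψ : ℝ => (1/2) * ψ - σ * Real.sin ψ with hf
    have hder : ∀ x : ℝ, HasDerivAt f (1/2 - σ * Real.cos x) x := by
      intro x
      have := ((hasDerivAt_id x).const_mul (1/2 : ℝ)).sub ((Real.hasDerivAt_sin x).const_mul σ)
      exact this.congr_deriv (by ring)
    have hmono : MonotoneOn f (Icc lo hi) := by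
      apply monotoneOn_of_deriv_nonneg (convex_Icc lo hi)
      · exact fun x _ => (hder x).continuousAt.continuousWithinAt
      · exact fun x _ => (hder x).differentiableAt.differentiableWithinAt
      · intro x hx
        rw [(hder x).deriv]
        rw [interior_Icc] at hx
        have h := hcos x ⟨hx.1.le, hx.2.le⟩
        have h' : σ * Real.cos x ≤ 1/2 := by
          rcases hσ with rfl | rfl
          · calc (1:ℝ) * Real.cos x = Real.cos x := one_mul _
              _ ≤ |Real.cos x| := le_abs_self _
              _ ≤ 1/2 := h
          · calc (-1:ℝ) * Real.cos x = -(Real.cos x) := by ring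
              _ ≤ |Real.cos x| := neg_le_abs _
              _ ≤ 1/2 := h
        linarith
    have := hmono h₁ h₂ h12
    simp only [hf] at this
    linarith
  have k1 := key 1 (Or.inl rfl)
  have k2 := key (-1) (Or.inr rfl)
  rw [abs_le]
  constructor <;> nlinarith

lemma phi_zeros {h : ℝ → ℝ} {s₀ r : ℝ} (hr : 0 < r)
    (hlip : ∀ x ∈ Icc (s₀ - r) (s₀ + r), ∀ y ∈ Icc (s₀ - r) (s₀ + r),
      |h x - h y| ≤ (1/4) * |x - y|) :
    ∃ α ∈ Ioo (π/3) (2*π/3), ∃ β ∈ Ioo (4*π/3) (5*π/3),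
      ∀ ψ ∈ Ioc (-(π/3)) (5*π/3),
        (0 < r * Real.cos ψ + h s₀ - h (s₀ + r * Real.sin ψ) ↔ (ψ < α ∨ β < ψ)) ∧
        (r * Real.cos ψ + h s₀ - h (s₀ + r * Real.sin ψ) < 0 ↔ (α < ψ ∧ ψ < β)) := by
  have hπ := Real.pi_pos
  have sqrt3_ge : (1:ℝ) ≤ Real.sqrt 3 := by
    rw [show (1:ℝ) = Real.sqrt 1 by simp]
    exact Real.sqrt_le_sqrt (by norm_num)
  set φ := fun ψ : ℝ => r * Real.cos ψ + h s₀ - h (s₀ + r * Real.sin ψ) with hφ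
  have habs_sin : ∀ ψ : ℝ, |Real.sin ψ| ≤ 1 := fun ψ =>
    abs_le.mpr ⟨Real.neg_one_le_sin ψ, Real.sin_le_one ψ⟩
  have hmem : ∀ ψ : ℝ, s₀ + r * Real.sin ψ ∈ Icc (s₀ - r) (s₀ + r) := by
    intro ψ
    have := abs_le.mp (habs_sin ψ)
    constructor <;> nlinarith
  have hs0 : s₀ ∈ Icc (s₀ - r) (s₀ + r) := ⟨by linarith, by linarith⟩
  have hb : ∀ ψ : ℝ, |h s₀ - h (s₀ + r * Real.sin ψ)| ≤ (1/4) * (r * |Real.sin ψ|) := by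
    intro ψ
    have := hlip s₀ hs0 _ (hmem ψ)
    have he : |s₀ - (s₀ + r * Real.sin ψ)| = r * |Real.sin ψ| := by
      rw [show s₀ - (s₀ + r * Real.sin ψ) = -(r * Real.sin ψ) by ring, abs_neg, abs_mul,
        abs_of_pos hr]
    rwa [he] at this
  have Ppos : ∀ ψ : ℝ, 1/2 ≤ Real.cos ψ → 0 < φ ψ := by
    intro ψ hc
    have h1 := abs_le.mp (hb ψ)
    have h2 := habs_sin ψ
    have h3 := abs_nonneg (Real.sin ψ)
    simp only [hφ]
    nlinarith
  have Pneg : ∀ ψ : ℝ, Real.cos ψ ≤ -(1/2) → φ ψ < 0 := by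
    intro ψ hc
    have h1 := abs_le.mp (hb ψ)
    have h2 := habs_sin ψ
    have h3 := abs_nonneg (Real.sin ψ)
    simp only [hφ]
    nlinarith
  have hcont : ContinuousOn h (Icc (s₀ - r) (s₀ + r)) := by
    apply LipschitzOnWith.continuousOn (K := ⟨1/4, by norm_num⟩)
    apply LipschitzOnWith.of_dist_le_mul
    intro x hx y hy
    rw [Real.dist_eq, Real.dist_eq]
    exact_mod_cast hlip x hx y hy
  have hφc : ContinuousOn φ (univ : Set ℝ) := by
    apply ContinuousOn.sub
    · exact ((continuous_const.mul Real.continuous_cos).add continuous_const).continuousOn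
    · exact hcont.comp
        ((continuous_const.add (continuous_const.mul Real.continuous_sin)).continuousOn)
        (fun ψ _ => hmem ψ)
  -- strict monotonicity on the two transition intervals
  have mono1 : ∀ ψ₁ ∈ Icc (π/3) (2*π/3), ∀ ψ₂ ∈ Icc (π/3) (2*π/3), ψ₁ < ψ₂ → φ ψ₂ < φ ψ₁ := by
    intro ψ₁ h₁ ψ₂ h₂ h12
    have hc := cos_decay (c := Real.sqrt 3 / 2)
      (fun ψ hψ => sin_ge_sqrt3 hψ.1 hψ.2) ψ₁ h₁ ψ₂ h₂ h12.le
    have hs := sin_lip (fun ψ hψ => abs_cos_le_half hψ.1 hψ.2) ψ₁ h₁ ψ₂ h₂ h12.le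
    have hh := hlip _ (hmem ψ₂) _ (hmem ψ₁)
    have he : |s₀ + r * Real.sin ψ₂ - (s₀ + r * Real.sin ψ₁)| =
        r * |Real.sin ψ₂ - Real.sin ψ₁| := by
      rw [show s₀ + r * Real.sin ψ₂ - (s₀ + r * Real.sin ψ₁) = r * (Real.sin ψ₂ - Real.sin ψ₁)
        by ring, abs_mul, abs_of_pos hr]
    rw [he] at hh
    have h1 := abs_le.mp hh
    have h2 := abs_nonneg (Real.sin ψ₂ - Real.sin ψ₁)
    have hΔ : 0 < ψ₂ - ψ₁ := by linarith
    have hcr := mul_le_mul_of_nonneg_left hc hr.le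
    have hsr := mul_le_mul_of_nonneg_left hs hr.le
    have hrd := mul_pos hr hΔ
    have hq := mul_le_mul_of_nonneg_right sqrt3_ge hrd.le
    show r * Real.cos ψ₂ + h s₀ - h (s₀ + r * Real.sin ψ₂) <
      r * Real.cos ψ₁ + h s₀ - h (s₀ + r * Real.sin ψ₁)
    nlinarith [h1.1, h1.2]
  have mono2 : ∀ ψ₁ ∈ Icc (4*π/3) (5*π/3), ∀ ψ₂ ∈ Icc (4*π/3) (5*π/3), ψ₁ < ψ₂ →
      φ ψ₁ < φ ψ₂ := by
    intro ψ₁ h₁ ψ₂ h₂ h12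
    have hc := cos_grow (c := Real.sqrt 3 / 2)
      (fun ψ hψ => sin_le_neg_sqrt3 hψ.1 hψ.2) ψ₁ h₁ ψ₂ h₂ h12.le
    have hs := sin_lip (fun ψ hψ => abs_cos_le_half' hψ.1 hψ.2) ψ₁ h₁ ψ₂ h₂ h12.le
    have hh := hlip _ (hmem ψ₂) _ (hmem ψ₁)
    have he : |s₀ + r * Real.sin ψ₂ - (s₀ + r * Real.sin ψ₁)| =
        r * |Real.sin ψ₂ - Real.sin ψ₁| := by
      rw [show s₀ + r * Real.sin ψ₂ - (s₀ + r * Real.sin ψ₁) = r * (Real.sin ψ₂ - Real.sin ψ₁)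
        by ring, abs_mul, abs_of_pos hr]
    rw [he] at hh
    have h1 := abs_le.mp hh
    have h2 := abs_nonneg (Real.sin ψ₂ - Real.sin ψ₁)
    have hΔ : 0 < ψ₂ - ψ₁ := by linarith
    have hcr := mul_le_mul_of_nonneg_left hc hr.le
    have hsr := mul_le_mul_of_nonneg_left hs hr.le
    have hrd := mul_pos hr hΔ
    have hq := mul_le_mul_of_nonneg_right sqrt3_ge hrd.le
    show r * Real.cos ψ₁ + h s₀ - h (s₀ + r * Real.sin ψ₁) <
      r * Real.cos ψ₂ + h s₀ - h (s₀ + r * Real.sin ψ₂)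
    nlinarith [h1.1, h1.2]
  -- boundary values
  have v1 : 0 < φ (π/3) := Ppos _ (cos_ge_half (by rw [abs_of_pos (by positivity)]))
  have v2 : φ (2*π/3) < 0 := Pneg _ (cos_le_neg_half le_rfl (by linarith))
  have v3 : φ (4*π/3) < 0 := Pneg _ (cos_le_neg_half (by linarith) le_rfl)
  have v4 : 0 < φ (5*π/3) := by
    apply Ppos
    have he : 5*π/3 - 2*π = -(π/3) := by ring
    have := cos_ge_half (ψ := -(π/3)) (by rw [abs_neg, abs_of_pos (by positivity)])
    rwa [← he, Real.cos_sub_two_pi] at this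
  -- IVT
  obtain ⟨α, hαIoo, hφα⟩ : ∃ α ∈ Ioo (π/3) (2*π/3), φ α = 0 := by
    have hsub := intermediate_value_Ioo' (a := π/3) (b := 2*π/3) (by linarith)
      (hφc.mono (subset_univ _))
    have : (0:ℝ) ∈ Ioo (φ (2*π/3)) (φ (π/3)) := ⟨v2, v1⟩
    obtain ⟨α, hα, hval⟩ := hsub this
    exact ⟨α, hα, hval⟩
  obtain ⟨β, hβIoo, hφβ⟩ : ∃ β ∈ Ioo (4*π/3) (5*π/3), φ β = 0 := by
    have hsub := intermediate_value_Ioo (a := 4*π/3) (b := 5*π/3) (by linarith)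
      (hφc.mono (subset_univ _))
    have : (0:ℝ) ∈ Ioo (φ (4*π/3)) (φ (5*π/3)) := ⟨v3, v4⟩
    obtain ⟨β, hβ, hval⟩ := hsub this
    exact ⟨β, hβ, hval⟩
  refine ⟨α, hαIoo, β, hβIoo, ?_⟩
  intro ψ hψ
  obtain ⟨hψ1, hψ2⟩ := hψ
  show (0 < φ ψ ↔ (ψ < α ∨ β < ψ)) ∧ (φ ψ < 0 ↔ (α < ψ ∧ ψ < β))
  obtain ⟨hα1, hα2⟩ := hαIoo
  obtain ⟨hβ1, hβ2⟩ := hβIoo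
  rcases le_or_gt ψ (π/3) with c1 | c1
  · have hpos : 0 < φ ψ := Ppos _ (cos_ge_half (abs_le.mpr ⟨by linarith, c1⟩))
    exact ⟨iff_of_true hpos (Or.inl (by linarith)),
      iff_of_false (by linarith) (fun hc => by linarith [hc.1])⟩
  · rcases le_or_gt ψ (2*π/3) with c2 | c2
    · have hψI : ψ ∈ Icc (π/3) (2*π/3) := ⟨c1.le, c2⟩
      have hαI : α ∈ Icc (π/3) (2*π/3) := ⟨hα1.le, hα2.le⟩
      rcases lt_trichotomy ψ α with c3 | c3 | c3
      · have := mono1 ψ hψI α hαI c3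
        rw [hφα] at this
        exact ⟨iff_of_true this (Or.inl c3),
          iff_of_false (by linarith) (fun hc => by linarith [hc.1])⟩
      · subst c3
        exact ⟨iff_of_false (by rw [hφα]; exact lt_irrefl 0)
            (fun hc => by rcases hc with hc | hc <;> linarith),
          iff_of_false (by rw [hφα]; exact lt_irrefl 0) (fun hc => by linarith [hc.1])⟩
      · have := mono1 α hαI ψ hψI c3
        rw [hφα] at this
        exact ⟨iff_of_false (by linarith)
            (fun hc => by rcases hc with hc | hc <;> linarith),
          iff_of_true this ⟨c3, by linarith⟩⟩
    · rcases le_or_gt ψ (4*π/3) with c3 | c3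
      · have hneg : φ ψ < 0 := Pneg _ (cos_le_neg_half c2.le c3)
        exact ⟨iff_of_false (by linarith)
            (fun hc => by rcases hc with hc | hc <;> linarith),
          iff_of_true hneg ⟨by linarith, by linarith⟩⟩
      · have hψI : ψ ∈ Icc (4*π/3) (5*π/3) := ⟨c3.le, hψ2⟩
        have hβI : β ∈ Icc (4*π/3) (5*π/3) := ⟨hβ1.le, hβ2.le⟩
        rcases lt_trichotomy ψ β with c4 | c4 | c4
        · have := mono2 ψ hψI β hβI c4
          rw [hφβ] at this
          exact ⟨iff_of_false (by linarith)
              (fun hc => by rcases hc with hc | hc <;> linarith),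
            iff_of_true this ⟨by linarith, c4⟩⟩
        · subst c4
          exact ⟨iff_of_false (by rw [hφβ]; exact lt_irrefl 0)
              (fun hc => by rcases hc with hc | hc <;> linarith),
            iff_of_false (by rw [hφβ]; exact lt_irrefl 0) (fun hc => by linarith [hc.2])⟩
        · have := mono2 β hβI ψ hψI c4
          rw [hφβ] at this
          exact ⟨iff_of_true (by linarith) (Or.inr c4),
            iff_of_false (by linarith) (fun hc => by linarith [hc.2])⟩

set_option maxHeartbeats 1600000 in
theorem level_component_is_diameter (Ω : Set ℂ) (hΩ : IsOpen Ω)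
    (u : ℂ → ℝ) (hu : ContDiffOn ℝ 1 u Ω) (hlmvp : HasLMVP Ω u)
    (x₀ : ℂ) (hx₀ : x₀ ∈ Ω) (hD : fderiv ℝ u x₀ ≠ 0) :
    ∃ r > (0:ℝ), ball x₀ r ⊆ Ω ∧ ∃ v : ℂ, ‖v‖ = 1 ∧
      connectedComponentIn ({x : ℂ | u x = u x₀} ∩ ball x₀ r) x₀ =
        {x ∈ ball x₀ r | ∃ t : ℝ, x = x₀ + t • v} := by
  classical
  obtain ⟨R, hRcont, hRbound, hmed⟩ := hlmvp
  set m := u x₀ with hm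
  set D := fderiv ℝ u x₀ with hD'
  set g : ℂ := ⟨D 1, D Complex.I⟩ with hg
  have hDval : ∀ z : ℂ, D z = ((starRingEnd ℂ) g * z).re := by
    intro z
    have hz : z = z.re • (1:ℂ) + z.im • Complex.I := by
      rw [Complex.real_smul, Complex.real_smul, mul_one, Complex.re_add_im]
    calc D z = D (z.re • 1 + z.im • Complex.I) := by rw [← hz]
      _ = z.re * D 1 + z.im * D Complex.I := by
          rw [map_add, D.map_smul, D.map_smul]; simp [smul_eq_mul]
      _ = ((starRingEnd ℂ) g * z).re := by
          simp [hg, Complex.mul_re, Complex.conj_re, Complex.conj_im]; ring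
  have hgne : g ≠ 0 := by
    intro h0
    apply hD
    ext z
    show D z = 0
    rw [hDval z, h0]
    simp
  set c := ‖g‖ with hc
  have hcpos : 0 < c := by
    rw [hc]
    exact (norm_pos_iff.mpr hgne)
  set n : ℂ := (c : ℂ)⁻¹ * g with hn
  have hcne : (c : ℂ) ≠ 0 := by
    simp only [ne_eq, Complex.ofReal_eq_zero]
    exact ne_of_gt hcpos
  have hnnorm : ‖n‖ = 1 := by
    rw [hn, norm_mul, norm_inv, Complex.norm_real, Real.norm_eq_abs, abs_of_pos hcpos, ← hc]
    field_simp
  have hgn : (starRingEnd ℂ) g * n = (c:ℂ) := by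
    rw [hn, mul_comm ((c:ℂ)⁻¹) g, ← mul_assoc]
    rw [mul_comm ((starRingEnd ℂ) g) g, Complex.mul_conj]
    rw [Complex.normSq_eq_norm_sq, ← hc]
    push_cast
    field_simp
  set pt : ℝ → ℝ → ℂ := fun t s => x₀ + n * (t + s * Complex.I) with hpt
  have hpt00 : pt 0 0 = x₀ := by simp [hpt]
  have hptsub : ∀ t s t' s' : ℝ, pt t s - pt t' s' =
      n * (((t - t') : ℝ) + ((s - s') : ℝ) * Complex.I) := by
    intro t s t' s'
    simp only [hpt]
    push_cast
    ring
  have hptd : ∀ t s t' s' : ℝ, ‖pt t s - pt t' s'‖ =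
      ‖(((t - t') : ℝ) + ((s - s') : ℝ) * Complex.I : ℂ)‖ := by
    intro t s t' s'
    rw [hptsub]
    rw [norm_mul, hnnorm, one_mul]
  have habs_le : ∀ x y : ℝ, ‖(x:ℂ) + (y:ℂ) * Complex.I‖ ≤ |x| + |y| := by
    intro x y
    calc ‖(x:ℂ) + (y:ℂ) * Complex.I‖
        ≤ ‖(x:ℂ)‖ + ‖(y:ℂ) * Complex.I‖ := norm_add_le _ _
      _ = |x| + |y| := by rw [norm_mul, Complex.norm_I, mul_one, Complex.norm_real,
          Complex.norm_real, Real.norm_eq_abs, Real.norm_eq_abs]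
  have habs_ge_re : ∀ x y : ℝ, |x| ≤ ‖(x:ℂ) + (y:ℂ) * Complex.I‖ := by
    intro x y
    have := Complex.abs_re_le_norm ((x:ℂ) + (y:ℂ) * Complex.I)
    simpa using this
  have habs_ge_im : ∀ x y : ℝ, |y| ≤ ‖(x:ℂ) + (y:ℂ) * Complex.I‖ := by
    intro x y
    have := Complex.abs_im_le_norm ((x:ℂ) + (y:ℂ) * Complex.I)
    simpa using this
  have hDpt : ∀ t s t' s' : ℝ, D (pt t s - pt t' s') = c * (t - t') := by
    intro t s t' s'
    rw [hptsub, hDval, ← mul_assoc, hgn]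
    simp [Complex.mul_re, Complex.add_re, Complex.add_im, Complex.mul_im,
      Complex.ofReal_re, Complex.ofReal_im, Complex.I_re, Complex.I_im]
  -- continuity of the derivative and choice of the small ball
  have hdiff : ∀ z ∈ Ω, DifferentiableAt ℝ u z := fun z hz =>
    (hu.contDiffAt (hΩ.mem_nhds hz)).differentiableAt one_ne_zero
  have hfd : ContinuousOn (fderiv ℝ u) Ω := hu.continuousOn_fderiv_of_isOpen hΩ le_rfl
  set δ := c/8 with hδ
  have hδpos : 0 < δ := by rw [hδ]; positivity
  obtain ⟨ρ₀, hρ₀, hρ₀Ω⟩ := Metric.isOpen_iff.mp hΩ x₀ hx₀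
  have hcontD : ContinuousAt (fderiv ℝ u) x₀ := hfd.continuousAt (hΩ.mem_nhds hx₀)
  obtain ⟨ρ₁, hρ₁, hρ₁b⟩ := Metric.continuousAt_iff.mp hcontD δ hδpos
  set ρ := min ρ₀ ρ₁ / 2 with hρ
  have hρpos : 0 < ρ := by rw [hρ]; positivity
  have hρlt₀ : ρ < ρ₀ := by
    rw [hρ]
    have := min_le_left ρ₀ ρ₁
    linarith
  have hρlt₁ : ρ < ρ₁ := by
    rw [hρ]
    have := min_le_right ρ₀ ρ₁
    linarith
  have hρΩ : closedBall x₀ ρ ⊆ Ω :=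
    (closedBall_subset_ball hρlt₀).trans hρ₀Ω
  have hρD : ∀ z ∈ closedBall x₀ ρ, ‖fderiv ℝ u z - D‖ ≤ δ := by
    intro z hz
    have h1 : dist z x₀ < ρ₁ := lt_of_le_of_lt (mem_closedBall.mp hz) hρlt₁
    have h2 := hρ₁b h1
    rw [dist_eq_norm] at h2
    exact h2.le
  -- the fundamental linearization estimate
  have hE : ∀ z ∈ closedBall x₀ ρ, ∀ z' ∈ closedBall x₀ ρ,
      |u z' - u z - D (z' - z)| ≤ δ * ‖z' - z‖ := by
    intro z hz z' hz'
    have hconv : Convex ℝ (closedBall x₀ ρ) := convex_closedBall _ _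
    have hder : ∀ w ∈ closedBall x₀ ρ, HasFDerivWithinAt (fun y => u y - D y)
        (fderiv ℝ u w - D) (closedBall x₀ ρ) w := fun w hw =>
      (((hdiff w (hρΩ hw)).hasFDerivAt).sub (D.hasFDerivAt)).hasFDerivWithinAt
    have key := hconv.norm_image_sub_le_of_norm_hasFDerivWithin_le hder hρD hz hz'
    rw [Real.norm_eq_abs] at key
    calc |u z' - u z - D (z' - z)| = |u z' - D z' - (u z - D z)| := by
          rw [map_sub]; ring_nf
      _ ≤ δ * ‖z' - z‖ := key
  set a := ρ/2 with ha
  have hapos : 0 < a := by rw [ha]; positivity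
  have hptmem : ∀ t s : ℝ, |t| ≤ a → |s| ≤ a → pt t s ∈ closedBall x₀ ρ := by
    intro t s ht hs
    rw [mem_closedBall, dist_eq_norm, show pt t s - x₀ = pt t s - pt 0 0 by rw [hpt00], hptd]
    simp only [sub_zero]
    calc ‖(t:ℂ) + (s:ℂ) * Complex.I‖ ≤ |t| + |s| := habs_le t s
      _ ≤ ρ := by rw [ha] at ht hs; linarith
  -- quantitative monotonicity in the t-direction
  have hmono : ∀ s t t' : ℝ, |s| ≤ a → |t| ≤ a → |t'| ≤ a → t < t' →
      u (pt t s) + (c/2) * (t' - t) ≤ u (pt t' s) := by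
    intro s t t' hs ht ht' htt
    have h1 := hE (pt t s) (hptmem t s ht hs) (pt t' s) (hptmem t' s ht' hs)
    have h2 : D (pt t' s - pt t s) = c * (t' - t) := hDpt t' s t s
    have h3 : ‖pt t' s - pt t s‖ = |t' - t| := by
      rw [hptd]
      simp only [sub_self, Complex.ofReal_zero, zero_mul, add_zero, Complex.norm_real, Real.norm_eq_abs]
    rw [h2, h3] at h1
    have h4 := abs_le.mp h1
    have h5 : |t' - t| = t' - t := abs_of_pos (by linarith)
    rw [h5] at h4
    have h6 : 0 < t' - t := by linarith
    have h7 := h4.1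
    rw [hδ] at h7
    linarith [mul_pos hcpos h6]
  -- existence of the level height h s
  have hval0 : u (pt 0 0) = m := by rw [hpt00]
  have hnear : ∀ s : ℝ, |s| ≤ a → |u (pt 0 s) - m| ≤ δ * |s| := by
    intro s hs
    have h1 := hE (pt 0 0) (hptmem 0 0 (by simp [hapos.le]) (by simp [hapos.le]))
      (pt 0 s) (hptmem 0 s (by simp [hapos.le]) hs)
    have h2 : D (pt 0 s - pt 0 0) = c * (0 - 0) := hDpt 0 s 0 0
    have h3 : ‖pt 0 s - pt 0 0‖ = |s| := by
      rw [hptd]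
      simp only [sub_self, Complex.ofReal_zero, sub_zero]
      rw [show (0:ℂ) + (s:ℂ) * Complex.I = (s:ℂ) * Complex.I by ring, norm_mul, Complex.norm_I,
        mul_one, Complex.norm_real, Real.norm_eq_abs]
    rw [h2, h3, hval0] at h1
    simpa using h1
  have hupper : ∀ s : ℝ, |s| ≤ a → m < u (pt a s) := by
    intro s hs
    have h1 := hmono s 0 a hs (by simp [hapos.le]) (by rw [abs_of_pos hapos]) hapos
    have h2 := abs_le.mp (hnear s hs)
    have h3 : δ * |s| ≤ δ * a := by
      apply mul_le_mul_of_nonneg_left hs hδpos.le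
    rw [hδ] at h2 h3
    linarith [mul_pos hcpos hapos, h2.1, h2.2]
  have hlower : ∀ s : ℝ, |s| ≤ a → u (pt (-a) s) < m := by
    intro s hs
    have h1 := hmono s (-a) 0 hs (by rw [abs_neg, abs_of_pos hapos]) (by simp [hapos.le])
      (by linarith)
    have h2 := abs_le.mp (hnear s hs)
    have h3 : δ * |s| ≤ δ * a := by
      apply mul_le_mul_of_nonneg_left hs hδpos.le
    rw [hδ] at h2 h3
    linarith [mul_pos hcpos hapos, h2.1, h2.2]
  have hucont : ∀ s : ℝ, |s| ≤ a → ContinuousOn (fun t => u (pt t s)) (Icc (-a) a) := by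
    intro s hs
    apply (hu.continuousOn).comp
    · apply Continuous.continuousOn
      apply continuous_const.add
      apply continuous_const.mul
      exact (Complex.continuous_ofReal.add continuous_const)
    · intro t ht
      exact hρΩ (hptmem t s (abs_le.mpr ⟨ht.1, ht.2⟩) hs)
  have hIVT : ∀ s : ℝ, |s| ≤ a → ∃ t : ℝ, |t| ≤ a ∧ u (pt t s) = m := by
    intro s hs
    have hsub := intermediate_value_Icc (le_of_lt (by linarith : -a < a)) (hucont s hs)
    have hmem : m ∈ Icc (u (pt (-a) s)) (u (pt a s)) :=
      ⟨(hlower s hs).le, (hupper s hs).le⟩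
    obtain ⟨t, ht, hvt⟩ := hsub hmem
    exact ⟨t, abs_le.mpr ⟨ht.1, ht.2⟩, hvt⟩
  choose! h hmemh hvalh using hIVT
  -- strict monotonicity and the characterization of the level set
  have hstrict : ∀ s t t' : ℝ, |s| ≤ a → |t| ≤ a → |t'| ≤ a → t < t' →
      u (pt t s) < u (pt t' s) := by
    intro s t t' hs ht ht' htt
    have h1 := hmono s t t' hs ht ht' htt
    have h2 : 0 < c * (t' - t) := mul_pos hcpos (by linarith)
    linarith
  have hcharlt : ∀ s t : ℝ, |s| ≤ a → |t| ≤ a → (u (pt t s) < m ↔ t < h s) := by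
    intro s t hs ht
    have hhs := hmemh s hs
    have hv := hvalh s hs
    constructor
    · intro hlt
      by_contra hge
      push_neg at hge
      rcases eq_or_lt_of_le hge with heq | hgt
      · rw [heq] at hv; linarith
      · have := hstrict s (h s) t hs hhs ht hgt
        rw [hv] at this; linarith
    · intro hlt
      have := hstrict s t (h s) hs ht hhs hlt
      rwa [hv] at this
  have hchargt : ∀ s t : ℝ, |s| ≤ a → |t| ≤ a → (m < u (pt t s) ↔ h s < t) := by
    intro s t hs ht
    have hhs := hmemh s hs
    have hv := hvalh s hs
    constructor
    · intro hlt
      by_contra hge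
      push_neg at hge
      rcases eq_or_lt_of_le hge with heq | hgt
      · rw [← heq] at hv; linarith
      · have := hstrict s t (h s) hs ht hhs hgt
        rw [hv] at this; linarith
    · intro hlt
      have := hstrict s (h s) t hs hhs ht hlt
      rwa [hv] at this
  have hchareq : ∀ s t : ℝ, |s| ≤ a → |t| ≤ a → (u (pt t s) = m ↔ t = h s) := by
    intro s t hs ht
    constructor
    · intro hv
      by_contra hne
      rcases lt_or_gt_of_ne hne with hlt | hgt
      · have := (hcharlt s t hs ht).mpr hlt; linarith
      · have := (hchargt s t hs ht).mpr hgt; linarith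
    · intro hv; rw [hv]; exact hvalh s hs
  have h0a : |(0:ℝ)| ≤ a := by simp [hapos.le]
  have hh0 : h 0 = 0 := ((hchareq 0 0 h0a h0a).mp hval0).symm
  -- h is 1/4-Lipschitz
  have hliph : ∀ s s' : ℝ, |s| ≤ a → |s'| ≤ a → |h s - h s'| ≤ (1/4) * |s - s'| := by
    intro s s' hs hs'
    have h1 := hE (pt (h s') s') (hptmem _ _ (hmemh s' hs') hs')
      (pt (h s) s) (hptmem _ _ (hmemh s hs) hs)
    rw [hvalh s hs, hvalh s' hs', hDpt] at h1
    have h1' : |c * (h s - h s')| ≤ δ * ‖pt (h s) s - pt (h s') s'‖ := by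
      calc |c * (h s - h s')| = |m - m - c * (h s - h s')| := by
            rw [sub_self, zero_sub, abs_neg]
        _ ≤ δ * ‖pt (h s) s - pt (h s') s'‖ := h1
    have h2 : ‖pt (h s) s - pt (h s') s'‖ ≤ |h s - h s'| + |s - s'| := by
      rw [hptd]; exact habs_le _ _
    have h3 : |c * (h s - h s')| = c * |h s - h s'| := by rw [abs_mul, abs_of_pos hcpos]
    have h4 : c * |h s - h s'| ≤ δ * (|h s - h s'| + |s - s'|) := by
      rw [← h3]
      exact h1'.trans (mul_le_mul_of_nonneg_left h2 hδpos.le)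
    rw [hδ] at h4
    by_contra hcon
    push_neg at hcon
    have h6 : c * ((1/4) * |s - s'|) < c * |h s - h s'| := mul_lt_mul_of_pos_left hcon hcpos
    have h7 : 0 ≤ c * |s - s'| := mul_nonneg hcpos.le (abs_nonneg _)
    linarith
  -- lower bound for the admissible radii on the closed ball
  obtain ⟨z₀, hz₀K, hz₀min⟩ := (isCompact_closedBall x₀ ρ).exists_isMinOn
      ⟨x₀, mem_closedBall_self hρpos.le⟩ (hRcont.mono hρΩ)
  set R₀ := R z₀ with hR₀
  have hR₀pos : 0 < R₀ := (hRbound z₀ (hρΩ hz₀K)).1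
  have hR₀le : ∀ p ∈ closedBall x₀ ρ, R₀ ≤ R p := fun p hp => isMinOn_iff.mp hz₀min p hp
  have hπ := Real.pi_pos
  set d₁ := min (a/8) R₀ / 2 with hd₁
  have hd₁pos : 0 < d₁ := by
    have h1 : 0 < min (a/8) R₀ := lt_min (by positivity) hR₀pos
    rw [hd₁]; linarith
  have hsmall : ∀ s : ℝ, |s| ≤ a → |h s| ≤ (1/4) * |s| := by
    intro s hs
    have := hliph s 0 hs h0a
    simpa [hh0] using this
  -- THE MIDPOINT PROPERTY
  have hmid : ∀ s₀ d : ℝ, |s₀| ≤ a/4 → 0 < d → d ≤ d₁ →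
      h (s₀ + d) + h (s₀ - d) = 2 * h s₀ := by
    intro s₀ d hs₀ hd hdle
    have hmin1 : min (a/8) R₀ ≤ a/8 := min_le_left _ _
    have hmin2 : min (a/8) R₀ ≤ R₀ := min_le_right _ _
    have hda : 2*d ≤ a/8 := by rw [hd₁] at hdle; linarith
    have hdR : 2*d ≤ R₀ := by rw [hd₁] at hdle; linarith
    have hs₀nn := abs_nonneg s₀
    have hs₀a : |s₀| ≤ a := by linarith
    have habs_d : |d| = d := abs_of_pos hd
    have hs₁a : |s₀ + d| ≤ a := by
      have := abs_add_le s₀ d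
      rw [habs_d] at this
      linarith
    have hs₂a : |s₀ - d| ≤ a := by
      have := abs_sub s₀ d
      rw [habs_d] at this
      linarith
    have hΔhle : |h (s₀ + d) - h s₀| ≤ (1/4) * d := by
      have h1 := hliph (s₀ + d) s₀ hs₁a hs₀a
      have h2 : s₀ + d - s₀ = d := by ring
      rw [h2, habs_d] at h1
      exact h1
    set p := pt (h s₀) s₀ with hp
    set q := pt (h (s₀ + d)) (s₀ + d) with hq
    set r := ‖q - p‖ with hr
    have hrabs : r = ‖(↑(h (s₀ + d) - h s₀) : ℂ) + (↑d : ℂ) * Complex.I‖ := by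
      rw [hr, hq, hp, hptd]
      have h2 : s₀ + d - s₀ = d := by ring
      rw [h2]
    have hrge : d ≤ r := by
      rw [hrabs]
      have := habs_ge_im (h (s₀ + d) - h s₀) d
      rw [habs_d] at this
      exact this
    have hrle : r ≤ 2*d := by
      rw [hrabs]
      have := habs_le (h (s₀ + d) - h s₀) d
      rw [habs_d] at this
      linarith
    have hr0 : 0 < r := lt_of_lt_of_le hd hrge
    have hpK : p ∈ closedBall x₀ ρ := hptmem _ _ (hmemh s₀ hs₀a) hs₀a
    have hpΩ : p ∈ Ω := hρΩ hpK
    have hup : u p = m := hvalh s₀ hs₀a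
    have hrR : r ≤ R p := le_trans (by linarith) (hR₀le p hpK)
    have hmedp := hmed p hpΩ r hr0 hrR
    rw [hup] at hmedp
    obtain ⟨hmeas1, hmeas2⟩ := hmedp
    -- window bounds
    have hwin : ∀ x ∈ Icc (s₀ - r) (s₀ + r), |x| ≤ a := by
      intro x hx
      obtain ⟨hx1, hx2⟩ := hx
      obtain ⟨hl, hr'⟩ := abs_le.mp hs₀a
      rw [abs_le]
      obtain ⟨hl4, hr4⟩ := abs_le.mp hs₀
      constructor <;> linarith
    have hlip' : ∀ x ∈ Icc (s₀ - r) (s₀ + r), ∀ y ∈ Icc (s₀ - r) (s₀ + r),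
        |h x - h y| ≤ (1/4) * |x - y| :=
      fun x hx y hy => hliph x y (hwin x hx) (hwin y hy)
    obtain ⟨α, hαI, β, hβI, hsign⟩ := phi_zeros hr0 hlip'
    obtain ⟨hα1, hα2⟩ := hαI
    obtain ⟨hβ1, hβ2⟩ := hβI
    -- circle parametrization in pt-coordinates
    set γ := Complex.arg n with hγ
    have hexp : Complex.exp ((γ:ℂ) * Complex.I) = n := by
      have := Complex.norm_mul_exp_arg_mul_I n
      rwa [hnnorm, Complex.ofReal_one, one_mul] at this
    have hcircle : ∀ ψ : ℝ, circleMap p r (ψ + γ) =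
        pt (h s₀ + r * Real.cos ψ) (s₀ + r * Real.sin ψ) := by
      intro ψ
      show p + r * Complex.exp ((↑(ψ + γ)) * Complex.I) = _
      have he : Complex.exp ((↑(ψ + γ)) * Complex.I)
          = ((Real.cos ψ : ℂ) + (Real.sin ψ : ℂ) * Complex.I) * n := by
        rw [Complex.ofReal_add, add_mul, Complex.exp_add, hexp, Complex.exp_mul_I]
        rw [Complex.ofReal_cos, Complex.ofReal_sin]
      rw [he, hp, hpt]
      simp only []
      push_cast
      ring
    have hcmem : ∀ ψ : ℝ, (s₀ + r * Real.sin ψ) ∈ Icc (s₀ - r) (s₀ + r) := by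
      intro ψ
      have hges : r * (-1) ≤ r * Real.sin ψ := mul_le_mul_of_nonneg_left (Real.neg_one_le_sin ψ) hr0.le
      have hles : r * Real.sin ψ ≤ r * 1 := mul_le_mul_of_nonneg_left (Real.sin_le_one ψ) hr0.le
      constructor <;> linarith
    have htmem : ∀ ψ : ℝ, |h s₀ + r * Real.cos ψ| ≤ a := by
      intro ψ
      have h1 := hsmall s₀ hs₀a
      have h2 : |r * Real.cos ψ| ≤ r := by
        rw [abs_mul, abs_of_pos hr0]
        have hc1 : |Real.cos ψ| ≤ 1 := abs_le.mpr ⟨Real.neg_one_le_cos ψ, Real.cos_le_one ψ⟩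
        have := mul_le_mul_of_nonneg_left hc1 hr0.le
        linarith
      calc |h s₀ + r * Real.cos ψ| ≤ |h s₀| + |r * Real.cos ψ| := abs_add_le _ _
        _ ≤ (1/4) * |s₀| + r := by linarith
        _ ≤ a := by linarith
    have hsignu : ∀ ψ : ℝ, (m < u (circleMap p r (ψ + γ)) ↔
          0 < r * Real.cos ψ + h s₀ - h (s₀ + r * Real.sin ψ)) ∧
        (u (circleMap p r (ψ + γ)) < m ↔
          r * Real.cos ψ + h s₀ - h (s₀ + r * Real.sin ψ) < 0) := by
      intro ψ
      rw [hcircle ψ]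
      have hsmem : |s₀ + r * Real.sin ψ| ≤ a := hwin _ (hcmem ψ)
      constructor
      · rw [hchargt _ _ hsmem (htmem ψ)]
        constructor <;> intro hyp <;> linarith
      · rw [hcharlt _ _ hsmem (htmem ψ)]
        constructor <;> intro hyp <;> linarith
    -- continuity of θ ↦ u (circleMap p r θ)
    have hfEcont : Continuous (fun θ => u (circleMap p r θ)) := by
      rw [← continuousOn_univ]
      apply hu.continuousOn.comp (continuous_circleMap p r).continuousOn
      intro θ _
      have he : circleMap p r θ = circleMap p r ((θ - γ) + γ) := by norm_num
      rw [he, hcircle]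
      exact hρΩ (hptmem _ _ (htmem _) (hwin _ (hcmem _)))
    have hJ : -(π/3) + 2*π = 5*π/3 := by ring
    -- first median inequality : β - α ≤ π
    have keyle : β - α ≤ π := by
      set E := {θ : ℝ | m ≤ u (circleMap p r θ)} with hEdef
      have hEmeas : MeasurableSet E := (isClosed_le continuous_const hfEcont).measurableSet
      have hper : ∀ x : ℝ, x + 2*π ∈ E ↔ x ∈ E := by
        intro x
        simp only [hEdef, mem_setOf_eq, (periodic_circleMap p r) x]
      have hsep : {θ ∈ Ioc (0:ℝ) (2*π) | m ≤ u (circleMap p r θ)} = E ∩ Ioc 0 (2*π) := by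
        ext θ
        simp only [hEdef, mem_setOf_eq, mem_inter_iff, mem_Ioc]
        tauto
      rw [vol_Ioc_div_two, hsep, periodic_shift_volume hEmeas hper γ (-(π/3)), hJ] at hmeas1
      have hset : {ψ ∈ Ioc (-(π/3)) (5*π/3) | γ + ψ ∈ E} =
          Ioc (-(π/3)) α ∪ Icc β (5*π/3) := by
        ext ψ
        simp only [hEdef, mem_setOf_eq, mem_Ioc, mem_union, mem_Icc]
        constructor
        · rintro ⟨⟨h1, h2⟩, h3⟩
          rw [add_comm γ ψ] at h3
          have hs := hsign ψ ⟨h1, h2⟩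
          by_cases hψα : ψ ≤ α
          · exact Or.inl ⟨h1, hψα⟩
          · push_neg at hψα
            right
            refine ⟨?_, h2⟩
            by_contra hψβ
            push_neg at hψβ
            have hneg := (hs.2).mpr ⟨hψα, hψβ⟩
            have := (hsignu ψ).2.mpr hneg
            linarith
        · rintro (⟨h1, h2⟩ | ⟨h1, h2⟩)
          · have hs := hsign ψ ⟨h1, by linarith⟩
            refine ⟨⟨h1, by linarith⟩, ?_⟩
            rw [add_comm γ ψ]
            apply le_of_not_gt
            intro hlt
            have := ((hsignu ψ).2.mp hlt)
            have hc := (hs.2).mp this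
            linarith [hc.1]
          · have hs := hsign ψ ⟨by linarith, h2⟩
            refine ⟨⟨by linarith, h2⟩, ?_⟩
            rw [add_comm γ ψ]
            apply le_of_not_gt
            intro hlt
            have := ((hsignu ψ).2.mp hlt)
            have hc := (hs.2).mp this
            linarith [hc.2]
      rw [hset] at hmeas1
      have hdisj : Disjoint (Ioc (-(π/3)) α) (Icc β (5*π/3)) := by
        apply Set.disjoint_left.mpr
        intro ψ h1 h2
        have := h1.2
        have := h2.1
        linarith
      rw [measure_union hdisj measurableSet_Icc, Real.volume_Ioc, Real.volume_Icc,
        ← ENNReal.ofReal_add (by linarith) (by linarith)] at hmeas1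
      have := (ENNReal.ofReal_le_ofReal_iff (by linarith)).mp hmeas1
      linarith
    -- second median inequality : π ≤ β - α
    have keyge : π ≤ β - α := by
      set E := {θ : ℝ | u (circleMap p r θ) ≤ m} with hEdef
      have hEmeas : MeasurableSet E := (isClosed_le hfEcont continuous_const).measurableSet
      have hper : ∀ x : ℝ, x + 2*π ∈ E ↔ x ∈ E := by
        intro x
        simp only [hEdef, mem_setOf_eq, (periodic_circleMap p r) x]
      have hsep : {θ ∈ Ioc (0:ℝ) (2*π) | u (circleMap p r θ) ≤ m} = E ∩ Ioc 0 (2*π) := by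
        ext θ
        simp only [hEdef, mem_setOf_eq, mem_inter_iff, mem_Ioc]
        tauto
      rw [vol_Ioc_div_two, hsep, periodic_shift_volume hEmeas hper γ (-(π/3)), hJ] at hmeas2
      have hset : {ψ ∈ Ioc (-(π/3)) (5*π/3) | γ + ψ ∈ E} = Icc α β := by
        ext ψ
        simp only [hEdef, mem_setOf_eq, mem_Ioc, mem_Icc]
        constructor
        · rintro ⟨⟨h1, h2⟩, h3⟩
          rw [add_comm γ ψ] at h3
          have hs := hsign ψ ⟨h1, h2⟩
          constructor
          · by_contra hψα
            push_neg at hψα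
            have hpos := (hs.1).mpr (Or.inl hψα)
            have := (hsignu ψ).1.mpr hpos
            linarith
          · by_contra hψβ
            push_neg at hψβ
            have hpos := (hs.1).mpr (Or.inr hψβ)
            have := (hsignu ψ).1.mpr hpos
            linarith
        · rintro ⟨h1, h2⟩
          have hmemJ : ψ ∈ Ioc (-(π/3)) (5*π/3) := ⟨by linarith, by linarith⟩
          have hs := hsign ψ hmemJ
          refine ⟨⟨by linarith, by linarith⟩, ?_⟩
          rw [add_comm γ ψ]
          apply le_of_not_gt
          intro hlt
          have := ((hsignu ψ).1.mp hlt)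
          rcases (hs.1).mp this with hc | hc <;> linarith
      rw [hset, Real.volume_Icc] at hmeas2
      have := (ENNReal.ofReal_le_ofReal_iff (by linarith)).mp hmeas2
      linarith
    have hβval : β = α + π := by linarith
    -- the angle of the second graph point q
    set ζ := (↑(h (s₀ + d) - h s₀) : ℂ) + (↑d : ℂ) * Complex.I with hζ
    have hζim : ζ.im = d := by
      simp [hζ]
    have hζre : ζ.re = h (s₀ + d) - h s₀ := by
      simp [hζ]
    have hζne : ζ ≠ 0 := by
      intro h0
      rw [h0] at hζim
      simp at hζim
      linarith [hζim ▸ hd]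
    set ψq := Complex.arg ζ with hψq
    have hζabs : ‖ζ‖ = r := hrabs.symm
    have hsinq : Real.sin ψq = d / r := by
      rw [hψq, Complex.sin_arg, hζabs, hζim]
    have hcosq : Real.cos ψq = (h (s₀ + d) - h s₀) / r := by
      rw [hψq, Complex.cos_arg hζne, hζabs, hζre]
    have hsinqpos : 0 < Real.sin ψq := by
      rw [hsinq]; positivity
    have hq1 : -π < ψq := Complex.neg_pi_lt_arg ζ
    have hq2 : ψq ≤ π := Complex.arg_le_pi ζ
    have hqpos : 0 < ψq := by
      by_contra hle
      push_neg at hle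
      have := Real.sin_nonpos_of_nonpos_of_neg_pi_le hle hq1.le
      linarith
    have hψqJ : ψq ∈ Ioc (-(π/3)) (5*π/3) := ⟨by linarith, by linarith⟩
    have hrne : r ≠ 0 := ne_of_gt hr0
    have hrs : r * Real.sin ψq = d := by rw [hsinq]; field_simp
    have hrc : r * Real.cos ψq = h (s₀ + d) - h s₀ := by rw [hcosq]; field_simp
    have hφψq : r * Real.cos ψq + h s₀ - h (s₀ + r * Real.sin ψq) = 0 := by
      rw [hrs, hrc]; ring
    have hsψq := hsign ψq hψqJ
    have hψqα : ψq = α := by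
      have h1 : ¬ (ψq < α ∨ β < ψq) := by
        intro hc
        have := (hsψq.1).mpr hc
        linarith
      have h2 : ¬ (α < ψq ∧ ψq < β) := by
        intro hc
        have := (hsψq.2).mpr hc
        linarith
      push_neg at h1 h2
      rcases eq_or_lt_of_le h1.1 with heq | hgt
      · exact heq.symm
      · exfalso
        have hβψ : β ≤ ψq := h2 hgt
        have hψβ : ψq = β := le_antisymm h1.2 hβψ
        have hsβneg : Real.sin β ≤ -(Real.sqrt 3 / 2) := sin_le_neg_sqrt3 hβ1.le hβ2.le
        have h3 : (0:ℝ) < Real.sqrt 3 := by positivity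
        rw [hψβ] at hsinqpos
        linarith
    have hφβ : r * Real.cos β + h s₀ - h (s₀ + r * Real.sin β) = 0 := by
      have hsβ := hsign β ⟨by linarith, by linarith⟩
      have h1 : ¬ (0 < r * Real.cos β + h s₀ - h (s₀ + r * Real.sin β)) := by
        intro hc
        rcases (hsβ.1).mp hc with hc' | hc' <;> linarith
      have h2 : ¬ (r * Real.cos β + h s₀ - h (s₀ + r * Real.sin β) < 0) := by
        intro hc
        have := (hsβ.2).mp hc
        linarith [this.2]
      linarith [not_lt.mp h1, not_lt.mp h2]
    rw [hβval, ← hψqα, Real.cos_add_pi, Real.sin_add_pi, mul_neg, mul_neg, hrs, hrc] at hφβ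
    have hfin : s₀ + -d = s₀ - d := by ring
    rw [hfin] at hφβ
    linarith
  -- h is linear on a small interval
  set a₄ := min (a/4) d₁ with ha₄
  have ha₄pos : 0 < a₄ := lt_min (by positivity) hd₁pos
  have ha₄le1 : a₄ ≤ a/4 := min_le_left _ _
  have ha₄le2 : a₄ ≤ d₁ := min_le_right _ _
  have ha₄a : a₄ ≤ a := by linarith
  have hmidfull : ∀ x ∈ Icc (-a₄) a₄, ∀ y ∈ Icc (-a₄) a₄,
      h ((x+y)/2) = (h x + h y)/2 := by
    have key : ∀ x ∈ Icc (-a₄) a₄, ∀ y ∈ Icc (-a₄) a₄, x < y →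
        h ((x+y)/2) = (h x + h y)/2 := by
      intro x hx y hy hlt
      have hs₀ : |(x+y)/2| ≤ a/4 := by
        rw [abs_le]
        constructor <;> [linarith [hx.1, hy.1, ha₄le1]; linarith [hx.2, hy.2, ha₄le1]]
      have hdpos : 0 < (y-x)/2 := by linarith
      have hdle : (y-x)/2 ≤ d₁ := by
        have := hx.1
        have := hy.2
        linarith
      have hmm := hmid ((x+y)/2) ((y-x)/2) hs₀ hdpos hdle
      have e1 : (x+y)/2 + (y-x)/2 = y := by ring
      have e2 : (x+y)/2 - (y-x)/2 = x := by ring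
      rw [e1, e2] at hmm
      linarith
    intro x hx y hy
    rcases lt_trichotomy x y with hlt | heq | hgt
    · exact key x hx y hy hlt
    · subst heq
      rw [show (x+x)/2 = x by ring]
      ring
    · rw [show (x+y)/2 = (y+x)/2 by ring, key y hy x hx hgt]
      ring
  have hIccsub : ∀ x ∈ Icc (-a₄) a₄, |x| ≤ a := by
    intro x hx
    rw [abs_le]
    exact ⟨by linarith [hx.1], by linarith [hx.2]⟩
  have hcont4 : ContinuousOn h (Icc (-a₄) a₄) := by
    apply LipschitzOnWith.continuousOn (K := ⟨1/4, by norm_num⟩)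
    apply LipschitzOnWith.of_dist_le_mul
    intro x hx y hy
    rw [Real.dist_eq, Real.dist_eq]
    exact_mod_cast hliph x y (hIccsub x hx) (hIccsub y hy)
  have hlin := midpoint_linear ha₄pos hcont4 hmidfull hh0
  set k := h a₄ / a₄ with hk
  -- the direction vector
  set ν := ‖(k:ℂ) + Complex.I‖ with hν
  have hkIne : ((k:ℂ) + Complex.I) ≠ 0 := by
    intro h0
    have := congrArg Complex.im h0
    simp at this
  have hνpos : 0 < ν := by
    rw [hν]
    exact norm_pos_iff.mpr hkIne
  set w := n * ((k:ℂ) + Complex.I) with hw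
  set v : ℂ := (ν⁻¹ : ℝ) • w with hv
  have hvnorm : ‖v‖ = 1 := by
    rw [hv, norm_smul, hw]
    rw [norm_mul, hnnorm, one_mul, ← hν]
    rw [Real.norm_eq_abs, abs_of_pos (inv_pos.mpr hνpos)]
    field_simp
  -- reconstruction of points from coordinates
  have hxpt : ∀ x : ℂ, pt ((x - x₀) * (starRingEnd ℂ) n).re ((x - x₀) * (starRingEnd ℂ) n).im
      = x := by
    intro x
    show x₀ + n * (↑((x - x₀) * (starRingEnd ℂ) n).re +
      ↑((x - x₀) * (starRingEnd ℂ) n).im * Complex.I) = x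
    rw [Complex.re_add_im]
    rw [show n * ((x - x₀) * (starRingEnd ℂ) n) = (x - x₀) * (n * (starRingEnd ℂ) n) by ring]
    rw [Complex.mul_conj, Complex.normSq_eq_norm_sq, hnnorm]
    simp
  have hcoordbd : ∀ x : ℂ, x ∈ ball x₀ a₄ →
      |((x - x₀) * (starRingEnd ℂ) n).re| < a₄ ∧
      |((x - x₀) * (starRingEnd ℂ) n).im| < a₄ := by
    intro x hx
    have habs : ‖(x - x₀) * (starRingEnd ℂ) n‖ < a₄ := by
      rw [norm_mul, Complex.norm_conj, hnnorm, mul_one]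
      rw [mem_ball, dist_eq_norm] at hx
      exact hx
    exact ⟨lt_of_le_of_lt (Complex.abs_re_le_norm _) habs,
      lt_of_le_of_lt (Complex.abs_im_le_norm _) habs⟩
  -- the level set in the small ball is the diameter in direction v
  have hfinal : {x : ℂ | u x = u x₀} ∩ ball x₀ a₄ =
      {x ∈ ball x₀ a₄ | ∃ t : ℝ, x = x₀ + t • v} := by
    ext x
    simp only [mem_inter_iff, mem_setOf_eq, mem_sep_iff]
    constructor
    · rintro ⟨hux, hxb⟩
      refine ⟨hxb, ?_⟩
      obtain ⟨htb, hsb⟩ := hcoordbd x hxb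
      set tx := ((x - x₀) * (starRingEnd ℂ) n).re with htx
      set sx := ((x - x₀) * (starRingEnd ℂ) n).im with hsx
      have hta : |tx| ≤ a := by linarith [ha₄a]
      have hsa : |sx| ≤ a := by linarith [ha₄a]
      have hxeq : pt tx sx = x := hxpt x
      have hux' : u (pt tx sx) = m := by rw [hxeq]; exact hux
      have hth : tx = h sx := (hchareq sx tx hsa hta).mp hux'
      have hsIcc : sx ∈ Icc (-a₄) a₄ := by
        rw [mem_Icc]
        exact ⟨by linarith [abs_le.mp hsb.le], by linarith [abs_le.mp hsb.le]⟩
      have hks : h sx = k * sx := hlin sx hsIcc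
      refine ⟨sx * ν, ?_⟩
      have hsmul : (sx * ν) • v = sx • w := by
        rw [hv, smul_smul]
        congr 1
        field_simp
      rw [hsmul, hw]
      have : x = pt tx sx := hxeq.symm
      rw [this]
      show x₀ + n * (↑tx + ↑sx * Complex.I) = x₀ + sx • (n * (↑k + Complex.I))
      rw [hth, hks]
      push_cast [Complex.real_smul]
      ring
    · rintro ⟨hxb, τ, hxeq⟩
      refine ⟨?_, hxb⟩
      have hcoord : (x - x₀) * (starRingEnd ℂ) n = ((τ * ν⁻¹ : ℝ) : ℂ) * ((k:ℂ) + Complex.I) := by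
        rw [hxeq]
        rw [show x₀ + τ • v - x₀ = τ • v by ring, hv, hw]
        rw [smul_smul, Complex.real_smul]
        rw [show ((τ * ν⁻¹ : ℝ) : ℂ) * (n * (↑k + Complex.I)) * (starRingEnd ℂ) n
          = ((τ * ν⁻¹ : ℝ) : ℂ) * (↑k + Complex.I) * (n * (starRingEnd ℂ) n) by ring]
        rw [Complex.mul_conj, Complex.normSq_eq_norm_sq, hnnorm]
        simp
      set σ := (τ * ν⁻¹ : ℝ) with hσ
      have htval : ((x - x₀) * (starRingEnd ℂ) n).re = σ * k := by
        rw [hcoord]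
        simp [Complex.add_re, Complex.ofReal_re, Complex.mul_re, Complex.I_re,
          Complex.ofReal_im, Complex.I_im, Complex.add_im]
      have hsval : ((x - x₀) * (starRingEnd ℂ) n).im = σ := by
        rw [hcoord]
        simp [Complex.add_im, Complex.ofReal_re, Complex.mul_im, Complex.I_im,
          Complex.ofReal_im, Complex.I_re, Complex.add_re]
      obtain ⟨htb, hsb⟩ := hcoordbd x hxb
      rw [hsval] at hsb
      have hsIcc : σ ∈ Icc (-a₄) a₄ := by
        rw [mem_Icc]
        exact ⟨by linarith [abs_le.mp hsb.le], by linarith [abs_le.mp hsb.le]⟩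
      have hks : h σ = k * σ := hlin σ hsIcc
      have hta : |σ * k| ≤ a := by rw [← htval]; linarith [ha₄a, abs_le.mp htb.le, htb.le]
      have hsa : |σ| ≤ a := by linarith [ha₄a, abs_le.mp hsb.le, hsb.le]
      have hxeq2 : pt (σ * k) σ = x := by
        have := hxpt x
        rw [htval, hsval] at this
        exact this
      have : u (pt (σ * k) σ) = m := by
        apply (hchareq σ (σ * k) hsa hta).mpr
        rw [hks]; ring
      rw [hxeq2] at this
      exact this
  -- conclusion
  refine ⟨a₄, ha₄pos, ?_, v, hvnorm, ?_⟩
  · intro x hx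
    apply hρΩ
    rw [mem_ball] at hx
    rw [mem_closedBall]
    have : a₄ ≤ ρ := by linarith
    linarith
  · rw [hfinal]
    have hSconv : Convex ℝ {x ∈ ball x₀ a₄ | ∃ t : ℝ, x = x₀ + t • v} := by
      have hrepr : {x ∈ ball x₀ a₄ | ∃ t : ℝ, x = x₀ + t • v}
          = ball x₀ a₄ ∩ {x : ℂ | ∃ t : ℝ, x = x₀ + t • v} := by
        ext x
        simp only [mem_sep_iff, mem_inter_iff, mem_setOf_eq]
      rw [hrepr]
      apply (convex_ball x₀ a₄).inter
      intro x hx y hy aa bb haa hbb hab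
      obtain ⟨t1, rfl⟩ := hx
      obtain ⟨t2, rfl⟩ := hy
      refine ⟨aa * t1 + bb * t2, ?_⟩
      have : aa • (x₀ + t1 • v) + bb • (x₀ + t2 • v)
          = (aa + bb) • x₀ + (aa * t1 + bb * t2) • v := by
        module
      rw [this, hab, one_smul]
    apply IsPreconnected.connectedComponentIn hSconv.isPreconnected
    exact ⟨mem_ball_self ha₄pos, 0, by simp⟩
end

section
/- Suppose u : B(x,r) → ℝ is continuous, equals a on two line segments emanating from x that meet at angle θ ≤ π/2, with u > a strictly inside the sector of angle θ between them and u < a outside on the rest of a small circle ∂B(x,ρ). Then for small ρ > 0, the arclength measure of {s ∈ ∂B(x,ρ) : u(s) > a} is at most θρ < πρ, so the median of u over ∂B(x,ρ) is strictly less than a; in particular u cannot satisfy u(x) = a = med_{∂B(x,ρ)} u. -/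
open MeasureTheory Set Metric Real Filter Topology

theorem sector_angle_median_below (x : ℂ) (ρ : ℝ) (hρ : 0 < ρ)
    (u : ℂ → ℝ) (hu : Continuous u) (a β θ : ℝ) (hθ0 : 0 < θ) (hθ : θ ≤ π/2)
    (hseg : ∀ t : ℝ, 0 ≤ t → t ≤ ρ →
      u (x + t • circleMap 0 1 β) = a ∧ u (x + t • circleMap 0 1 (β + θ)) = a)
    (hin : ∀ ψ ∈ Ioo β (β + θ), a < u (circleMap x ρ ψ))
    (hout : ∀ ψ ∈ Ioo (β + θ) (β + 2*π), u (circleMap x ρ ψ) < a) :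
    ENNReal.ofReal ρ * volume {ψ ∈ Ioc β (β + 2*π) | a < u (circleMap x ρ ψ)}
        ≤ ENNReal.ofReal (θ * ρ) ∧
      ∀ m : ℝ, IsCircleMedian x ρ u m → m < a := by
  set f : ℝ → ℝ := fun ψ => u (circleMap x ρ ψ) with hf
  have hfc : Continuous f := hu.comp (continuous_circleMap x ρ)
  have hper : Function.Periodic f (2*π) :=
    fun ψ => by simp only [hf]; rw [periodic_circleMap x ρ ψ]
  have hkey : ∀ ψ : ℝ, circleMap x ρ ψ = x + ρ • circleMap 0 1 ψ := by
    intro ψ; simp [circleMap, Complex.real_smul]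
  have hfβ : f β = a := by
    rw [hf]; simp only; rw [hkey β]; exact (hseg ρ hρ.le le_rfl).1
  have hfβθ : f (β + θ) = a := by
    rw [hf]; simp only; rw [hkey (β + θ)]; exact (hseg ρ hρ.le le_rfl).2
  have hfβ2π : f (β + 2*π) = a := (hper β).trans hfβ
  -- containment for the strict set
  have hsub : {ψ ∈ Ioc β (β + 2*π) | a < f ψ} ⊆ Ioo β (β + θ) := by
    rintro ψ ⟨⟨h1, h2⟩, h3⟩
    refine ⟨h1, ?_⟩
    by_contra h
    push_neg at h
    rcases eq_or_lt_of_le h with h' | h'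
    · rw [← h', hfβθ] at h3; exact lt_irrefl a h3
    · rcases eq_or_lt_of_le h2 with h'' | h''
      · rw [h'', hfβ2π] at h3; exact lt_irrefl a h3
      · exact absurd h3 (not_lt.2 (hout ψ ⟨h', h''⟩).le)
  have hπpos : (0:ℝ) < π := pi_pos
  constructor
  · calc ENNReal.ofReal ρ * volume {ψ ∈ Ioc β (β + 2*π) | a < f ψ}
        ≤ ENNReal.ofReal ρ * volume (Ioo β (β + θ)) :=
          mul_le_mul_right (measure_mono hsub) _
      _ = ENNReal.ofReal ρ * ENNReal.ofReal θ := by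
          rw [Real.volume_Ioo, add_sub_cancel_left]
      _ = ENNReal.ofReal (θ * ρ) := by
          rw [mul_comm, ← ENNReal.ofReal_mul hθ0.le]
  · intro m hm
    by_contra hma
    push_neg at hma  -- a ≤ m
    obtain ⟨hm1, _⟩ := hm
    -- the set where m ≤ f over Ioc 0 2π
    set A : Set ℝ := {ψ | a ≤ f ψ} with hA
    have hAmeas : MeasurableSet A := measurableSet_le measurable_const hfc.measurable
    have hAinv : ∀ g : AddSubgroup.zmultiples (2*π), (fun ψ => g +ᵥ ψ) ⁻¹' A = A := by
      rintro ⟨g, hg⟩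
      obtain ⟨k, rfl⟩ := hg
      ext ψ
      simp only [mem_preimage, hA, mem_setOf_eq]
      have h2 : f ((k • (2*π) : ℝ) + ψ) = f ψ := by
        have := (hper.zsmul k) ψ
        rwa [add_comm ψ] at this
      show a ≤ f ((k • (2*π) : ℝ) + ψ) ↔ a ≤ f ψ
      rw [h2]
    have hfd1 := isAddFundamentalDomain_Ioc (T := 2*π) (by positivity) 0 volume
    have hfd2 := isAddFundamentalDomain_Ioc (T := 2*π) (by positivity) β volume
    rw [zero_add] at hfd1
    have heq : volume (A ∩ Ioc 0 (2*π)) = volume (A ∩ Ioc β (β + 2*π)) :=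
      hfd1.measure_set_eq hfd2 hAmeas hAinv
    -- bound the right-hand side
    have hsub2 : A ∩ Ioc β (β + 2*π) ⊆ Icc β (β + θ) ∪ {β + 2*π} := by
      rintro ψ ⟨hψA, h1, h2⟩
      rcases eq_or_lt_of_le h2 with h' | h'
      · exact Or.inr (by simp [h'])
      · rcases le_or_gt ψ (β + θ) with h'' | h''
        · exact Or.inl ⟨h1.le, h''⟩
        · exact absurd (hout ψ ⟨h'', h'⟩) (not_lt.2 hψA)
    have hbound : volume (A ∩ Ioc β (β + 2*π)) ≤ ENNReal.ofReal θ := by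
      calc volume (A ∩ Ioc β (β + 2*π)) ≤ volume (Icc β (β + θ) ∪ {β + 2*π}) :=
            measure_mono hsub2
        _ ≤ volume (Icc β (β + θ)) + volume ({β + 2*π} : Set ℝ) := measure_union_le _ _
        _ = ENNReal.ofReal θ := by
            rw [Real.volume_Icc, Real.volume_singleton, add_zero, add_sub_cancel_left]
    -- the median lower bound
    have hmsub : {ψ ∈ Ioc (0:ℝ) (2*π) | m ≤ f ψ} ⊆ A ∩ Ioc 0 (2*π) := by
      rintro ψ ⟨h1, h2⟩
      exact ⟨le_trans hma h2, h1⟩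
    have hlow : ENNReal.ofReal π ≤ volume (A ∩ Ioc 0 (2*π)) := by
      refine le_trans ?_ (measure_mono hmsub)
      refine le_trans (le_of_eq ?_) hm1
      have h2 : (2:ENNReal) = ENNReal.ofReal 2 := by norm_num
      have h3 : ENNReal.ofReal ((2*π)/2) = ENNReal.ofReal (2*π) / ENNReal.ofReal 2 :=
        ENNReal.ofReal_div_of_pos (by norm_num)
      have h4 : (2*π)/2 = π := by ring
      rw [Real.volume_Ioc, sub_zero, h2, ← h3, h4]
    rw [heq] at hlow
    have : ENNReal.ofReal π ≤ ENNReal.ofReal θ := le_trans hlow hbound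
    rw [ENNReal.ofReal_le_ofReal_iff hθ0.le] at this
    linarith
end
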